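/- arXiv:2507.04405 — 6 statements merged into one kernel-verified Lean document; each statement's English description precedes it below -/
import Mathlib

section
/- Let δ, ρ > 0, let I ⊂ ℝ be an interval, k ∈ ℕ with k ≥ 1, and let φ be a C^k function on I such that |φ^{(k)}(x)| ≥ ρ for all x ∈ I. Then the Lebesgue measure of {x ∈ I : |φ(x)| < δ} is at most C_k · (δ/ρ)^{1/k}, where C_k is a constant depending only on k. -/
open MeasureTheory

namespace Stmt6Aux

open Set Polynomial

lemma polyCD (p : Polynomial ℝ) (n : ℕ∞) : ContDiff ℝ n (fun t : ℝ => p.eval t) := by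
  have h := AnalyticOnNhd.eval_polynomial (𝕜 := ℝ) (A := ℝ) p
  exact contDiff_iff_contDiffAt.mpr fun x => (h x (Set.mem_univ x)).contDiffAt

lemma polyIter (n : ℕ) (p : Polynomial ℝ) :
    iteratedDeriv n (fun t : ℝ => p.eval t) = fun t => (Polynomial.derivative^[n] p).eval t := by
  induction n generalizing p with
  | zero => simp [iteratedDeriv_zero]
  | succ n ih =>
    rw [iteratedDeriv_succ']
    have hd : deriv (fun t : ℝ => p.eval t) = fun t => (Polynomial.derivative p).eval t := by
      funext t; exact Polynomial.deriv p
    rw [hd, ih, Function.iterate_succ_apply]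

lemma iterDeriv_congr_nhds {n : ℕ} {f g : ℝ → ℝ} {x : ℝ} (h : f =ᶠ[nhds x] g) :
    iteratedDeriv n f x = iteratedDeriv n g x := by
  have h' : f =ᶠ[nhdsWithin x Set.univ] g := by rwa [nhdsWithin_univ]
  have h2 := h'.iteratedFDerivWithin_eq (𝕜 := ℝ) h.self_of_nhds n
  rw [iteratedFDerivWithin_univ, iteratedFDerivWithin_univ] at h2
  rw [iteratedDeriv_eq_iteratedFDeriv, iteratedDeriv_eq_iteratedFDeriv, h2]

lemma subPoly (n : ℕ) (U : Set ℝ) (hU : IsOpen U) :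
    ∀ (φ : ℝ → ℝ), ContDiffOn ℝ (n : ℕ∞) φ U → ∀ p : Polynomial ℝ, ∀ x ∈ U,
      iteratedDeriv n (fun t => φ t - p.eval t) x
        = iteratedDeriv n φ x - (Polynomial.derivative^[n] p).eval x := by
  induction n with
  | zero => intro φ _ p x _; simp [iteratedDeriv_zero]
  | succ n ih =>
    intro φ hφ p x hx
    have hφ' : ContDiffOn ℝ (n : ℕ∞) (deriv φ) U := by
      apply hφ.deriv_of_isOpen hU
      exact_mod_cast le_rfl
    have hEq : Set.EqOn (deriv (fun t => φ t - p.eval t))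
        (fun t => deriv φ t - (Polynomial.derivative p).eval t) U := by
      intro y hy
      have hφd : DifferentiableAt ℝ φ y := by
        have := (hφ.differentiableOn (by simp)) y hy
        exact this.differentiableAt (hU.mem_nhds hy)
      rw [deriv_fun_sub hφd (p.differentiableAt)]
      rw [Polynomial.deriv]
    rw [iteratedDeriv_succ']
    have hcong : iteratedDeriv n (deriv (fun t => φ t - p.eval t)) x
        = iteratedDeriv n (fun t => deriv φ t - (Polynomial.derivative p).eval t) x := by
      apply iterDeriv_congr_nhds
      exact Filter.eventuallyEq_of_mem (hU.mem_nhds hx) hEq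
    rw [hcong, ih (deriv φ) hφ' (Polynomial.derivative p) x hx, ← Function.iterate_succ_apply,
      ← iteratedDeriv_succ']

lemma rolleIter (n : ℕ) :
    ∀ (U : Set ℝ), IsOpen U → U.OrdConnected → ∀ (g : ℝ → ℝ), ContDiffOn ℝ (n : ℕ∞) g U →
    ∀ (x : ℕ → ℝ), (∀ i ≤ n, x i ∈ U) → (∀ i < n, x i < x (i + 1)) → (∀ i ≤ n, g (x i) = 0) →
    ∃ ξ ∈ U, iteratedDeriv n g ξ = 0 := by
  induction n with
  | zero =>
    intro U _ _ g _ x hxU _ hz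
    exact ⟨x 0, hxU 0 le_rfl, by simpa [iteratedDeriv_zero] using hz 0 le_rfl⟩
  | succ n ih =>
    intro U hU hUc g hg x hxU hmono hz
    have key : ∀ i : ℕ, ∃ c ∈ Set.Ioo (x (min i n)) (x (min i n + 1)), deriv g c = 0 := by
      intro i
      set j := min i n with hj
      have hjn : j ≤ n := min_le_right _ _
      have hab : x j < x (j + 1) := hmono j (by omega)
      have hsub : Set.Icc (x j) (x (j+1)) ⊆ U :=
        hUc.out (hxU j (by omega)) (hxU (j+1) (by omega))
      exact exists_deriv_eq_zero hab (hg.continuousOn.mono hsub)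
        ((hz j (by omega)).trans (hz (j+1) (by omega)).symm)
    choose y hy1 hy2 using key
    have hg' : ContDiffOn ℝ (n : ℕ∞) (deriv g) U := by
      apply hg.deriv_of_isOpen hU
      exact_mod_cast le_rfl
    have hyU : ∀ i ≤ n, y i ∈ U := by
      intro i hi
      have h1 := hy1 i
      rw [min_eq_left hi] at h1
      exact (hUc.out (hxU i (by omega)) (hxU (i+1) (by omega)))
        (Set.Ioo_subset_Icc_self h1)
    have hymono : ∀ i < n, y i < y (i + 1) := by
      intro i hi
      have h1 := hy1 i; rw [min_eq_left (by omega : i ≤ n)] at h1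
      have h2 := hy1 (i+1); rw [min_eq_left (by omega : i + 1 ≤ n)] at h2
      exact lt_trans h1.2 h2.1
    obtain ⟨ξ, hξU, hξ⟩ := ih U hU hUc (deriv g) hg' y hyU hymono (fun i _ => hy2 i)
    exact ⟨ξ, hξU, by rwa [iteratedDeriv_succ']⟩

lemma pickPoints (k : ℕ) (A : Set ℝ) (N : ℝ) (hAb : A ⊆ Set.Ioc (-N) N)
    (h ε : ℝ) (hh : 0 < h) (hε : 0 < ε)
    (hm : ENNReal.ofReal (k * (h + ε)) < volume A) :
    ∃ x : ℕ → ℝ, (∀ j ≤ k, x j ∈ A) ∧ ∀ i j, i < j → j ≤ k → h ≤ x j - x i := by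
  have hAfin : volume A ≠ ⊤ := by
    have : volume A ≤ volume (Set.Ioc (-N) N) := measure_mono hAb
    exact ne_top_of_le_ne_top (by simp [Real.volume_Ioc]) this
  set F : ℝ → ℝ := fun t => (volume (A ∩ Set.Iic t)).toReal with hF
  have hfin : ∀ t, volume (A ∩ Set.Iic t) ≠ ⊤ :=
    fun t => ne_top_of_le_ne_top hAfin (measure_mono Set.inter_subset_left)
  have hmono : ∀ s t : ℝ, s ≤ t → F s ≤ F t := by
    intro s t hst
    exact ENNReal.toReal_mono (hfin t)
      (measure_mono (Set.inter_subset_inter_right _ (Set.Iic_subset_Iic.mpr hst)))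
  have hsplit : ∀ s t : ℝ, s ≤ t → F t = F s + (volume (A ∩ Set.Ioc s t)).toReal := by
    intro s t hst
    have h1 : (A ∩ Set.Iic t) ∩ Set.Iic s = A ∩ Set.Iic s := by
      ext y; simp only [Set.mem_inter_iff, Set.mem_Iic]; constructor
      · rintro ⟨⟨hy1, _⟩, hy3⟩; exact ⟨hy1, hy3⟩
      · rintro ⟨hy1, hy2⟩; exact ⟨⟨hy1, hy2.trans hst⟩, hy2⟩
    have h2 : (A ∩ Set.Iic t) \ Set.Iic s = A ∩ Set.Ioc s t := by
      ext y; simp only [Set.mem_diff, Set.mem_inter_iff, Set.mem_Iic, Set.mem_Ioc, not_le]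
      tauto
    have := measure_inter_add_diff (μ := volume) (A ∩ Set.Iic t) (measurableSet_Iic (a := s))
    rw [h1, h2] at this
    show (volume (A ∩ Set.Iic t)).toReal = (volume (A ∩ Set.Iic s)).toReal + (volume (A ∩ Set.Ioc s t)).toReal
    rw [← this, ENNReal.toReal_add (hfin s) (ne_top_of_le_ne_top hAfin (measure_mono Set.inter_subset_left))]
  have hlip : ∀ s t : ℝ, s ≤ t → F t ≤ F s + (t - s) := by
    intro s t hst
    rw [hsplit s t hst]
    have : volume (A ∩ Set.Ioc s t) ≤ ENNReal.ofReal (t - s) := by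
      rw [← Real.volume_Ioc]; exact measure_mono Set.inter_subset_right
    have := ENNReal.toReal_mono (by simp) this
    rw [ENNReal.toReal_ofReal (by linarith)] at this
    linarith
  -- the key selection lemma
  have key : ∀ c : ℝ, 0 ≤ c → ENNReal.ofReal c < volume A →
      ∃ x ∈ A, c ≤ F x ∧ F x ≤ c + ε := by
    intro c hc hcm
    have hcm' : c < (volume A).toReal := by
      have := ENNReal.toReal_strict_mono hAfin hcm
      rwa [ENNReal.toReal_ofReal hc] at this
    set T : Set ℝ := {t | c < F t} with hT
    have hFN : F N = (volume A).toReal := by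
      show (volume (A ∩ Set.Iic N)).toReal = (volume A).toReal
      congr 2
      exact Set.inter_eq_self_of_subset_left (fun y hy => Set.mem_Iic.mpr (hAb hy).2)
    have hTne : T.Nonempty := ⟨N, by rwa [hT, Set.mem_setOf_eq, hFN]⟩
    have hTbdd : BddBelow T := by
      refine ⟨-N, fun t ht => ?_⟩
      by_contra hlt
      push_neg at hlt
      have : A ∩ Set.Iic t = ∅ := by
        ext y; simp only [Set.mem_inter_iff, Set.mem_Iic, Set.mem_empty_iff_false, iff_false]
        rintro ⟨hy1, hy2⟩
        exact absurd ((hAb hy1).1) (by linarith)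
      have : F t = 0 := by rw [hF]; simp [this]
      rw [hT, Set.mem_setOf_eq, this] at ht
      linarith
    set t₀ := sInf T with ht₀
    have hFle : F t₀ ≤ c := by
      refine le_of_forall_pos_le_add fun η hη => ?_
      have hs : t₀ - η ∉ T := fun hmem => absurd (csInf_le hTbdd hmem) (by linarith)
      rw [hT, Set.mem_setOf_eq, not_lt] at hs
      have := hlip (t₀ - η) t₀ (by linarith)
      linarith
    have hFge : c ≤ F t₀ := by
      refine le_of_forall_pos_le_add fun η hη => ?_
      obtain ⟨a, haT, ha⟩ := Real.lt_sInf_add_pos hTne hη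
      have hat : t₀ ≤ a := csInf_le hTbdd haT
      rw [hT, Set.mem_setOf_eq] at haT
      have := hlip t₀ a hat
      linarith
    obtain ⟨s, hsT, hs⟩ := Real.lt_sInf_add_pos hTne hε
    rw [hT, Set.mem_setOf_eq] at hsT
    have hts : t₀ ≤ s := csInf_le hTbdd (by rwa [hT, Set.mem_setOf_eq])
    have hpos : (volume (A ∩ Set.Ioc t₀ s)).toReal > 0 := by
      have := hsplit t₀ s hts
      linarith
    have hne : (A ∩ Set.Ioc t₀ s).Nonempty := by
      rcases Set.eq_empty_or_nonempty (A ∩ Set.Ioc t₀ s) with he | hne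
      · rw [he] at hpos; simp at hpos
      · exact hne
    obtain ⟨x, hxA, hxI⟩ := hne
    refine ⟨x, hxA, ?_, ?_⟩
    · calc c ≤ F t₀ := hFge
        _ ≤ F x := hmono _ _ (le_of_lt hxI.1)
    · calc F x ≤ F s := hmono _ _ hxI.2
        _ ≤ F t₀ + (s - t₀) := hlip _ _ hts
        _ ≤ c + ε := by linarith
  -- select the points
  have hsel : ∀ j : ℕ, ∃ x ∈ A, ((min j k : ℕ) : ℝ) * (h + ε) ≤ F x ∧ F x ≤ ((min j k : ℕ) : ℝ) * (h + ε) + ε := by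
    intro j
    apply key
    · positivity
    · refine lt_of_le_of_lt (ENNReal.ofReal_le_ofReal ?_) hm
      have : ((min j k : ℕ) : ℝ) ≤ (k : ℝ) := by exact_mod_cast min_le_right j k
      nlinarith
  choose x hxA hx1 hx2 using hsel
  refine ⟨x, fun j hj => hxA j, fun i j hij hjk => ?_⟩
  have hik : i ≤ k := by omega
  have hmin_i : (min i k : ℕ) = i := min_eq_left hik
  have hmin_j : (min j k : ℕ) = j := min_eq_left hjk
  have h1 := hx1 j; have h2 := hx2 i
  rw [hmin_j] at h1; rw [hmin_i] at h2
  have hij1 : (i : ℝ) + 1 ≤ (j : ℝ) := by exact_mod_cast hij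
  have hFgap : F (x i) + h ≤ F (x j) := by nlinarith
  have hxij : x i ≤ x j := by
    by_contra hlt
    push_neg at hlt
    have := hmono _ _ (le_of_lt hlt)
    linarith
  have := hlip (x i) (x j) hxij
  linarith

lemma iterDerivPolyConst (k : ℕ) (L : Polynomial ℝ) (hdeg : L.natDegree ≤ k) (t : ℝ) :
    (Polynomial.derivative^[k] L).eval t = (k.factorial : ℝ) * L.coeff k := by
  have h0 : (Polynomial.derivative^[k] L).natDegree = 0 :=
    le_antisymm (le_trans (Polynomial.natDegree_iterate_derivative L k) (by omega)) (Nat.zero_le _)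
  have hC : (Polynomial.derivative^[k] L) = C ((Polynomial.derivative^[k] L).coeff 0) :=
    Polynomial.eq_C_of_natDegree_le_zero (by omega)
  rw [hC, Polynomial.eval_C, Polynomial.coeff_iterate_derivative, Nat.zero_add,
    Nat.descFactorial_self, nsmul_eq_mul]

lemma basisDivisor_coeff_one (a b : ℝ) : (Lagrange.basisDivisor a b).coeff 1 = (a - b)⁻¹ := by
  show (Polynomial.C (a-b)⁻¹ * (Polynomial.X - Polynomial.C b)).coeff 1 = _
  rw [Polynomial.coeff_C_mul]
  simp

lemma basisDivisor_natDegree_le (a b : ℝ) : (Lagrange.basisDivisor a b).natDegree ≤ 1 := by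
  show (Polynomial.C (a-b)⁻¹ * (Polynomial.X - Polynomial.C b)).natDegree ≤ 1
  exact le_trans (Polynomial.natDegree_C_mul_le _ _) (le_of_eq (Polynomial.natDegree_X_sub_C _))

lemma lagrangeCoeffBound (k : ℕ) (h δ : ℝ) (hh : 0 < h) (hδ : 0 < δ)
    (v : Fin (k+1) → ℝ) (f : Fin (k+1) → ℝ)
    (hf : ∀ i, |f i| ≤ δ)
    (hgap : ∀ i j : Fin (k+1), i ≠ j → h ≤ |v i - v j|) :
    |(Lagrange.interpolate Finset.univ v f).coeff k| ≤ ((k:ℝ)+1) * δ / h^k := by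
  have hcard : ∀ i : Fin (k+1), (Finset.univ.erase i).card = k := by
    intro i
    rw [Finset.card_erase_of_mem (Finset.mem_univ i), Finset.card_univ, Fintype.card_fin]
    omega
  have hbasis : ∀ i : Fin (k+1),
      (Lagrange.basis Finset.univ v i).coeff k = ∏ j ∈ Finset.univ.erase i, (v i - v j)⁻¹ := by
    intro i
    rw [Lagrange.basis]
    have := Polynomial.coeff_prod_of_natDegree_le (Finset.univ.erase i)
      (fun j => Lagrange.basisDivisor (v i) (v j)) 1 ?_
    · rw [hcard i, mul_one] at this
      rw [this]
      exact Finset.prod_congr rfl fun j _ => basisDivisor_coeff_one _ _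
    · intro j _
      exact basisDivisor_natDegree_le _ _
  have hcoeff : (Lagrange.interpolate Finset.univ v f).coeff k
      = ∑ i, f i * (Lagrange.basis Finset.univ v i).coeff k := by
    rw [Lagrange.interpolate_apply, Polynomial.finset_sum_coeff]
    congr 1; funext i
    rw [Polynomial.coeff_C_mul]
  rw [hcoeff]
  calc |∑ i, f i * (Lagrange.basis Finset.univ v i).coeff k|
      ≤ ∑ i, |f i * (Lagrange.basis Finset.univ v i).coeff k| := Finset.abs_sum_le_sum_abs _ _
    _ ≤ ∑ _i : Fin (k+1), δ * (h ^ k)⁻¹ := by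
        apply Finset.sum_le_sum
        intro i _
        rw [abs_mul, hbasis i]
        have hprod : |∏ j ∈ Finset.univ.erase i, (v i - v j)⁻¹| ≤ (h ^ k)⁻¹ := by
          rw [Finset.abs_prod]
          have : ∀ j ∈ Finset.univ.erase i, |(v i - v j)⁻¹| ≤ h⁻¹ := by
            intro j hj
            rw [abs_inv]
            exact inv_anti₀ hh (hgap i j (fun hij => (Finset.mem_erase.mp hj).1 hij.symm))
          calc ∏ j ∈ Finset.univ.erase i, |(v i - v j)⁻¹|
              ≤ ∏ _j ∈ Finset.univ.erase i, h⁻¹ :=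
                Finset.prod_le_prod (fun j _ => abs_nonneg _) this
            _ = (h ^ k)⁻¹ := by rw [Finset.prod_const, hcard i, inv_pow]
        have := mul_le_mul (hf i) hprod (abs_nonneg _) (le_of_lt hδ)
        exact this
    _ = ((k:ℝ)+1) * δ / h^k := by
        rw [Finset.sum_const, Finset.card_univ, Fintype.card_fin, nsmul_eq_mul]
        push_cast
        ring

lemma derivWithinEqInterior (k : ℕ) (I : Set ℝ) (φ : ℝ → ℝ) (x : ℝ) (hx : x ∈ interior I) :
    iteratedDerivWithin k φ I x = iteratedDeriv k φ x := by
  have h1 : iteratedFDerivWithin ℝ k φ (I ∩ interior I) x = iteratedFDerivWithin ℝ k φ I x :=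
    iteratedFDerivWithin_inter_open isOpen_interior hx
  rw [Set.inter_eq_self_of_subset_right interior_subset] at h1
  have h2 := iteratedFDerivWithin_of_isOpen (𝕜 := ℝ) (f := φ) k isOpen_interior hx
  rw [iteratedDerivWithin_eq_iteratedFDerivWithin, iteratedDeriv_eq_iteratedFDeriv, ← h1, h2]

lemma boundaryNull (I : Set ℝ) (hI : I.OrdConnected) : volume (I \ interior I) = 0 := by
  set S := I \ interior I with hS
  have no3 : ∀ a ∈ I, ∀ c ∈ I, ∀ b, a < b → b < c → b ∈ interior I := by
    intro a ha c hc b hab hbc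
    have : Set.Ioo a c ⊆ interior I :=
      interior_maximal (Set.Ioo_subset_Icc_self.trans (hI.out ha hc)) isOpen_Ioo
    exact this ⟨hab, hbc⟩
  rcases Set.eq_empty_or_nonempty S with he | ⟨a, haS⟩
  · simp [he]
  · have hlo : (S ∩ Set.Iio a).Subsingleton := by
      intro b hb c hc
      by_contra hne
      rcases lt_or_gt_of_ne hne with hbc | hcb
      · exact hc.1.2 (no3 b hb.1.1 a haS.1 c hbc hc.2)
      · exact hb.1.2 (no3 c hc.1.1 a haS.1 b hcb hb.2)
    have hhi : (S ∩ Set.Ioi a).Subsingleton := by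
      intro b hb c hc
      by_contra hne
      rcases lt_or_gt_of_ne hne with hbc | hcb
      · exact hb.1.2 (no3 a haS.1 c hc.1.1 b hb.2 hbc)
      · exact hc.1.2 (no3 a haS.1 b hb.1.1 c hc.2 hcb)
    have hsub : S ⊆ (S ∩ Set.Iio a) ∪ ({a} ∪ (S ∩ Set.Ioi a)) := by
      intro b hb
      rcases lt_trichotomy b a with hba | hba | hba
      · exact Or.inl ⟨hb, hba⟩
      · exact Or.inr (Or.inl hba)
      · exact Or.inr (Or.inr ⟨hb, hba⟩)
    refine measure_mono_null hsub ?_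
    exact Set.Countable.measure_zero
      ((hlo.countable).union ((Set.countable_singleton a).union hhi.countable)) _

end Stmt6Aux

open Stmt6Aux Set Polynomial in
theorem stmt_6 (k : ℕ) (hk : 1 ≤ k) :
    ∃ C : ℝ, 0 < C ∧ ∀ I : Set ℝ, I.OrdConnected → ∀ φ : ℝ → ℝ,
      ContDiffOn ℝ (k : ℕ∞) φ I →
      ∀ δ ρ : ℝ, 0 < δ → 0 < ρ →
      (∀ x ∈ I, ρ ≤ |iteratedDerivWithin k φ I x|) →
      volume {x ∈ I | |φ x| < δ} ≤ ENNReal.ofReal (C * (δ / ρ) ^ ((k : ℝ)⁻¹)) := by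
  have hk0 : (0:ℝ) < k := by exact_mod_cast hk
  set Kc : ℝ := ((k.factorial * (k+1) : ℕ) : ℝ) with hKc
  have hKcpos : 0 < Kc := by positivity
  refine ⟨(k:ℝ) * Kc ^ ((k:ℝ)⁻¹), by positivity, ?_⟩
  set C : ℝ := (k:ℝ) * Kc ^ ((k:ℝ)⁻¹) with hCdef
  have hCpos : 0 < C := by positivity
  intro I hI φ hφ δ ρ hδ hρ hρbd
  set t : ℝ := (δ / ρ) ^ ((k:ℝ)⁻¹) with htdef
  have ht : 0 < t := Real.rpow_pos_of_pos (div_pos hδ hρ) _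
  by_contra hcon
  push_neg at hcon
  set U : Set ℝ := interior I with hUdef
  have hUo : IsOpen U := isOpen_interior
  have hUc : U.OrdConnected := hI.interior
  have hUI : U ⊆ I := interior_subset
  have hφU : ContDiffOn ℝ (k:ℕ∞) φ U := hφ.mono hUI
  have hρU : ∀ x ∈ U, ρ ≤ |iteratedDeriv k φ x| := by
    intro x hx
    rw [← derivWithinEqInterior k I φ x hx]
    exact hρbd x (hUI hx)
  set E' : Set ℝ := {x ∈ U | |φ x| < δ} with hE'def
  have hcon' : ENNReal.ofReal (C * t) < volume E' := by
    refine lt_of_lt_of_le hcon ?_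
    have hsub : {x ∈ I | |φ x| < δ} ⊆ E' ∪ (I \ U) := by
      intro x hx
      by_cases hxU : x ∈ U
      · exact Or.inl ⟨hxU, hx.2⟩
      · exact Or.inr ⟨hx.1, hxU⟩
    calc volume {x ∈ I | |φ x| < δ} ≤ volume (E' ∪ (I \ U)) := measure_mono hsub
      _ ≤ volume E' + volume (I \ U) := measure_union_le _ _
      _ = volume E' := by rw [boundaryNull I hI, add_zero]
  have hE'open : IsOpen E' := by
    have : E' = U ∩ (fun x => |φ x|) ⁻¹' Set.Iio δ := by
      ext x; simp [hE'def]
    rw [this]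
    exact (hφU.continuousOn.abs).isOpen_inter_preimage hUo isOpen_Iio
  -- restrict to a bounded piece
  have hcover : (⋃ n : ℕ, (E' ∩ Set.Ioo (-(n:ℝ)) n)) = E' := by
    ext x
    simp only [Set.mem_iUnion, Set.mem_inter_iff, Set.mem_Ioo]
    constructor
    · rintro ⟨n, hx, _⟩; exact hx
    · intro hx
      obtain ⟨n, hn⟩ := exists_nat_gt |x| 
      exact ⟨n, hx, by cases abs_lt.mp hn; constructor <;> linarith⟩
  have hmonoN : ∀ a b : ℕ, a ≤ b → (E' ∩ Set.Ioo (-(a:ℝ)) a) ⊆ (E' ∩ Set.Ioo (-(b:ℝ)) b) := by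
    intro a b hab
    apply Set.inter_subset_inter_right
    apply Set.Ioo_subset_Ioo
    · simp only [neg_le_neg_iff]; exact_mod_cast hab
    · exact_mod_cast hab
  have hdir : Directed (fun x1 x2 : Set ℝ => x1 ⊆ x2) (fun n : ℕ => E' ∩ Set.Ioo (-(n:ℝ)) n) :=
    fun a b => ⟨max a b, hmonoN _ _ (le_max_left a b), hmonoN _ _ (le_max_right a b)⟩
  have hsup : volume E' = ⨆ n : ℕ, volume (E' ∩ Set.Ioo (-(n:ℝ)) n) := by
    conv_lhs => rw [← hcover]
    exact hdir.measure_iUnion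
  rw [hsup] at hcon'
  obtain ⟨N, hN⟩ := lt_iSup_iff.mp hcon'
  set A : Set ℝ := E' ∩ Set.Ioo (-(N:ℝ)) N with hAdef
  have hAb : A ⊆ Set.Ioc (-(N:ℝ)) N := fun y hy => ⟨hy.2.1, le_of_lt hy.2.2⟩
  have hAfin : volume A ≠ ⊤ := by
    refine ne_top_of_le_ne_top ?_ (measure_mono hAb)
    simp [Real.volume_Ioc]
  set m : ℝ := (volume A).toReal with hmdef
  have hmlt : C * t < m := by
    have := ENNReal.toReal_strict_mono hAfin hN
    rwa [ENNReal.toReal_ofReal (by positivity)] at this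
  have hmpos : 0 < m := lt_trans (by positivity) hmlt
  set ε : ℝ := (m - C*t)/(4*k) with hεdef
  set hh : ℝ := (m + C*t)/(2*k) with hhdef
  have hεpos : 0 < ε := by
    apply div_pos (by linarith) (by linarith)
  have hhpos : 0 < hh := by
    apply div_pos (by positivity) (by linarith)
  have hkh : (k:ℝ)*(hh+ε) < m := by
    have h1 : (k:ℝ)*(hh+ε) = (3*m + C*t)/4 := by
      rw [hhdef, hεdef]; field_simp
      ring
    rw [h1]
    linarith
  have hm' : ENNReal.ofReal ((k:ℝ)*(hh+ε)) < volume A := by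
    rw [← ENNReal.ofReal_toReal hAfin]
    exact ENNReal.ofReal_lt_ofReal_iff hmpos |>.mpr hkh
  obtain ⟨x, hxA, hgap⟩ := pickPoints k A N hAb hh ε hhpos hεpos hm'
  set v : Fin (k+1) → ℝ := fun i => x i with hvdef
  have hvA : ∀ i : Fin (k+1), v i ∈ A := fun i => hxA i (Nat.lt_succ_iff.mp i.isLt)
  have hvU : ∀ i : Fin (k+1), v i ∈ U := fun i => ((hvA i).1).1
  have hvδ : ∀ i : Fin (k+1), |φ (v i)| < δ := fun i => ((hvA i).1).2
  have hgap' : ∀ i j : Fin (k+1), i ≠ j → hh ≤ |v i - v j| := by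
    intro i j hij
    rcases lt_or_gt_of_ne (fun hc : (i:ℕ) = (j:ℕ) => hij (Fin.ext hc)) with hlt | hgt
    · have := hgap i j hlt (by omega)
      rw [abs_sub_comm]
      exact le_trans this (le_abs_self _)
    · have := hgap j i hgt (by omega)
      exact le_trans this (le_abs_self _)
  have hinj : Set.InjOn v ↑(Finset.univ : Finset (Fin (k+1))) := by
    intro i _ j _ hEq
    by_contra hne
    have := hgap' i j hne
    rw [hEq] at this
    simp at this
    linarith
  set L : Polynomial ℝ := Lagrange.interpolate Finset.univ v (fun i => φ (v i)) with hLdef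
  have hdeg : L.natDegree ≤ k := by
    by_cases hL0 : L = 0
    · rw [hL0]; simp
    · have hdlt := Lagrange.degree_interpolate_lt (s := Finset.univ) (v := v)
        (fun i => φ (v i)) hinj
      rw [Finset.card_univ, Fintype.card_fin] at hdlt
      have := (Polynomial.natDegree_lt_iff_degree_lt hL0).mpr (by exact_mod_cast hdlt)
      omega
  set g : ℝ → ℝ := fun s => φ s - L.eval s with hgdef
  have hgU : ContDiffOn ℝ (k:ℕ∞) g U := hφU.sub ((polyCD L (k:ℕ∞)).contDiffOn)
  have hxU : ∀ i ≤ k, x i ∈ U := by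
    intro i hi
    exact hvU ⟨i, by omega⟩
  have hmono : ∀ i < k, x i < x (i+1) := by
    intro i hi
    have := hgap i (i+1) (by omega) (by omega)
    linarith
  have hz : ∀ i ≤ k, g (x i) = 0 := by
    intro i hi
    have hnode := Lagrange.eval_interpolate_at_node (s := (Finset.univ : Finset (Fin (k+1))))
      (v := v) (i := ⟨i, by omega⟩) (fun j => φ (v j)) hinj (Finset.mem_univ _)
    show φ (x i) - L.eval (x i) = 0
    have hvi : v ⟨i, by omega⟩ = x i := rfl
    rw [← hvi, ← hLdef] at *
    rw [hnode]
    ring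
  obtain ⟨ξ, hξU, hξ0⟩ := rolleIter k U hUo hUc g hgU x hxU hmono hz
  have hsplit := subPoly k U hUo φ hφU L ξ hξU
  have hφξ : iteratedDeriv k φ ξ = (k.factorial : ℝ) * L.coeff k := by
    have h0 : iteratedDeriv k φ ξ - (Polynomial.derivative^[k] L).eval ξ = 0 := by
      rw [← hsplit]; exact hξ0
    rw [iterDerivPolyConst k L hdeg ξ] at h0
    linarith
  have hρξ : ρ ≤ (k.factorial : ℝ) * |L.coeff k| := by
    have := hρU ξ hξU
    rw [hφξ, abs_mul, abs_of_nonneg (by positivity : (0:ℝ) ≤ (k.factorial : ℝ))] at this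
    exact this
  have hcoeffbd := lagrangeCoeffBound k hh δ hhpos hδ v (fun i => φ (v i))
    (fun i => le_of_lt (hvδ i)) hgap'
  have hρbd2 : ρ ≤ (k.factorial : ℝ) * (((k:ℝ)+1) * δ / hh^k) :=
    le_trans hρξ (by
      apply mul_le_mul_of_nonneg_left hcoeffbd (by positivity))
  have hhk : 0 < hh ^ k := pow_pos hhpos k
  have hKcval : Kc = (k.factorial : ℝ) * ((k:ℝ)+1) := by
    rw [hKc]; push_cast; ring
  have hpow : hh ^ k ≤ Kc * (δ / ρ) := by
    have h1 : ρ * hh ^ k ≤ (k.factorial : ℝ) * (((k:ℝ)+1) * δ) := by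
      have h2 : (k.factorial : ℝ) * (((k:ℝ)+1) * δ / hh^k) * hh^k
          = (k.factorial : ℝ) * (((k:ℝ)+1) * δ) := by
        field_simp
      nlinarith [mul_le_mul_of_nonneg_right hρbd2 (le_of_lt hhk)]
    rw [hKcval, ← mul_div_assoc, le_div_iff₀ hρ]
    nlinarith
  have hhle : hh ≤ (Kc * (δ/ρ)) ^ ((k:ℝ)⁻¹) := by
    have h2 : hh = (hh ^ k) ^ ((k:ℝ)⁻¹) := by
      rw [← Real.rpow_natCast hh k, ← Real.rpow_mul hhpos.le,
        mul_inv_cancel₀ (by positivity), Real.rpow_one]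
    rw [h2]
    exact Real.rpow_le_rpow (by positivity) hpow (by positivity)
  have hCk : C/(k:ℝ) = Kc ^ ((k:ℝ)⁻¹) := by
    rw [hCdef, mul_div_cancel_left₀ _ (ne_of_gt hk0)]
  have hQ : (Kc * (δ/ρ)) ^ ((k:ℝ)⁻¹) = (C/(k:ℝ)) * t := by
    rw [Real.mul_rpow hKcpos.le (div_pos hδ hρ).le, hCk, htdef]
  rw [hQ] at hhle
  have h4 : 2*(k:ℝ)*hh = m + C*t := by
    rw [hhdef, mul_comm, div_mul_cancel₀ _ (by positivity : (0:ℝ) < 2*(k:ℝ)).ne']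
  have h5 : 2*(k:ℝ)*hh ≤ 2*(k:ℝ)*((C/(k:ℝ))*t) :=
    mul_le_mul_of_nonneg_left hhle (by positivity)
  have h6 : 2*(k:ℝ)*((C/(k:ℝ))*t) = 2*C*t := by
    have hcc : C/(k:ℝ)*(k:ℝ) = C := div_mul_cancel₀ _ (ne_of_gt hk0)
    linear_combination 2*t*hcc
  linarith
end

section
/- Let f : I₀ → ℝ^m be a C^m parameterization of a curve (m ≥ 2) such that the Wronskian det[f'(t),…,f^{(m)}(t)] is bounded below in absolute value by a positive constant on I₀ and all derivatives f^{(k)}, 1 ≤ k ≤ m, are bounded on I₀. Then, possibly after shrinking I₀ to a subinterval, for all p ∈ ℝ^m and δ > 0, the Lebesgue measure of {s ∈ I₀ : |p · f'(s)| ≤ δ} is at most C·(δ/‖p‖)^{1/(m−1)}, where C depends only on f and m. -/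
open MeasureTheory Set

lemma sign_const {g' : ℝ → ℝ} {u v c : ℝ} (hc : 0 < c)
    (hcont : ContinuousOn g' (Set.Icc u v))
    (hlow : ∀ s ∈ Set.Icc u v, c ≤ |g' s|) :
    (∀ s ∈ Set.Icc u v, c ≤ g' s) ∨ (∀ s ∈ Set.Icc u v, g' s ≤ -c) := by
  by_contra h
  push_neg at h
  obtain ⟨⟨x, hx, hxv⟩, ⟨y, hy, hyv⟩⟩ := h
  have hxneg : g' x ≤ -c := by
    rcases abs_cases (g' x) with ⟨h1, h2⟩ | ⟨h1, h2⟩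
    · linarith [hlow x hx]
    · linarith [hlow x hx]
  have hypos : c ≤ g' y := by
    rcases abs_cases (g' y) with ⟨h1, h2⟩ | ⟨h1, h2⟩
    · linarith [hlow y hy]
    · linarith [hlow y hy]
  have hsub : Set.uIcc x y ⊆ Set.Icc u v := Set.uIcc_subset_Icc hx hy
  have h0 : (0:ℝ) ∈ Set.uIcc (g' x) (g' y) := by
    rw [Set.mem_uIcc]; left; constructor <;> linarith
  obtain ⟨z, hz, hz0⟩ := intermediate_value_uIcc (hcont.mono hsub) h0
  have := hlow z (hsub hz)
  rw [hz0] at this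
  simp only [abs_zero] at this; linarith

lemma slope_lower {g g' : ℝ → ℝ} {u v c : ℝ} (hc : 0 < c)
    (hder : ∀ s ∈ Set.Icc u v, HasDerivWithinAt g (g' s) (Set.Icc u v) s)
    (hcont : ContinuousOn g' (Set.Icc u v))
    (hlow : ∀ s ∈ Set.Icc u v, c ≤ |g' s|) :
    ∀ s ∈ Set.Icc u v, ∀ t ∈ Set.Icc u v, c * |s - t| ≤ |g s - g t| := by
  have key : ∀ (G G' : ℝ → ℝ), (∀ s ∈ Set.Icc u v, HasDerivWithinAt G (G' s) (Set.Icc u v) s) →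
      (∀ s ∈ Set.Icc u v, c ≤ G' s) →
      ∀ s ∈ Set.Icc u v, ∀ t ∈ Set.Icc u v, t ≤ s → c * (s - t) ≤ G s - G t := by
    intro G G' hd hl s hs t ht hts
    have hmono : MonotoneOn (fun x => G x - c * x) (Set.Icc u v) := by
      apply monotoneOn_of_hasDerivWithinAt_nonneg (convex_Icc u v)
        (f' := fun x => G' x - c)
      · exact fun x hx =>
          ((hd x hx).sub ((hasDerivWithinAt_id x _).const_mul c)).continuousWithinAt
      · intro x hx
        have hx' : x ∈ Set.Icc u v := interior_subset hx
        have := (((hd x hx').fun_sub ((hasDerivWithinAt_id x _).const_mul c))).mono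
          (interior_subset : interior (Set.Icc u v) ⊆ _)
        simpa using this
      · intro x hx
        have := hl x (interior_subset hx)
        show (0:ℝ) ≤ G' x - c
        linarith
    have := hmono ht hs hts
    simp only at this
    linarith
  have main : ∀ s ∈ Set.Icc u v, ∀ t ∈ Set.Icc u v, t ≤ s → c * (s - t) ≤ |g s - g t| := by
    rcases sign_const hc hcont hlow with hpos | hneg
    · intro s hs t ht hts
      have := key g g' hder hpos s hs t ht hts
      exact this.trans (le_abs_self _)
    · intro s hs t ht hts
      have := key (fun x => -g x) (fun x => -g' x)
        (fun x hx => (hder x hx).neg) (fun x hx => by linarith [hneg x hx]) s hs t ht hts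
      simp only [neg_sub_neg] at this
      calc c * (s - t) ≤ g t - g s := this
        _ ≤ |g s - g t| := by rw [abs_sub_comm]; exact le_abs_self _
  intro s hs t ht
  rcases le_total t s with h | h
  · rw [abs_of_nonneg (by linarith)]; exact main s hs t ht h
  · rw [abs_of_nonpos (by linarith), abs_sub_comm]
    have := main t ht s hs h
    linarith [this]


lemma sublevel (k : ℕ) (hk : 1 ≤ k) : ∀ (G : ℕ → ℝ → ℝ) (u v c δ : ℝ), 0 < c → 0 < δ →
    (∀ j < k, ∀ s ∈ Set.Icc u v, HasDerivWithinAt (G j) (G (j+1) s) (Set.Icc u v) s) →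
    ContinuousOn (G k) (Set.Icc u v) →
    (∀ s ∈ Set.Icc u v, c ≤ |G k s|) →
    volume {s ∈ Set.Icc u v | |G 0 s| ≤ δ} ≤
      ENNReal.ofReal ((4:ℝ)^k * (δ/c) ^ ((k:ℝ)⁻¹)) := by
  induction k, hk using Nat.le_induction with
  | base =>
    intro G u v c δ hc hδ hder hcont hlow
    rcases Set.eq_empty_or_nonempty {s ∈ Set.Icc u v | |G 0 s| ≤ δ} with hE | ⟨x₀, hx₀⟩
    · rw [hE, measure_empty]; exact zero_le
    · have slope := slope_lower hc (hder 0 one_pos) hcont hlow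
      have hsub : {s ∈ Set.Icc u v | |G 0 s| ≤ δ} ⊆ Set.Icc (x₀ - 2*δ/c) (x₀ + 2*δ/c) := by
        intro s hs
        have h1 := slope s hs.1 x₀ hx₀.1
        have h2 : |G 0 s - G 0 x₀| ≤ 2*δ := by
          calc |G 0 s - G 0 x₀| ≤ |G 0 s| + |G 0 x₀| := abs_sub _ _
            _ ≤ 2*δ := by linarith [hs.2, hx₀.2]
        have h3 : |s - x₀| ≤ 2*δ/c := by
          rw [le_div_iff₀ hc]; nlinarith [abs_nonneg (s - x₀)]
        rw [abs_le] at h3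
        exact ⟨by linarith [h3.1], by linarith [h3.2]⟩
      calc volume {s ∈ Set.Icc u v | |G 0 s| ≤ δ} ≤ volume (Set.Icc (x₀ - 2*δ/c) (x₀ + 2*δ/c)) :=
            measure_mono hsub
        _ = ENNReal.ofReal ((x₀ + 2*δ/c) - (x₀ - 2*δ/c)) := Real.volume_Icc
        _ ≤ ENNReal.ofReal ((4:ℝ)^1 * (δ/c) ^ ((1:ℕ):ℝ)⁻¹) := by
            apply ENNReal.ofReal_le_ofReal
            rw [Nat.cast_one, inv_one, Real.rpow_one]
            have : x₀ + 2*δ/c - (x₀ - 2*δ/c) = 4 * (δ/c) := by ring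
            rw [this, pow_one]
  | succ k hk IH =>
    intro G u v c δ hc hδ hder hcont hlow
    set x : ℝ := δ / c with hxdef
    have hx : 0 < x := div_pos hδ hc
    set e : ℝ := ((k:ℝ)+1)⁻¹ with hedef
    have hk0 : (0:ℝ) < (k:ℝ) := by exact_mod_cast hk
    have he : 0 < e := by positivity
    set ρ : ℝ := c * x ^ e with hρdef
    have hρ : 0 < ρ := mul_pos hc (Real.rpow_pos_of_pos hx e)
    have alg1 : (δ/ρ) ^ ((k:ℝ)⁻¹) = x ^ e := by
      have h1 : δ/ρ = x ^ (1 - e) := by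
        rw [Real.rpow_sub hx, Real.rpow_one, hρdef, hxdef]
        field_simp
      rw [h1, ← Real.rpow_mul hx.le]
      congr 1
      rw [hedef]
      field_simp
      ring
    have hgder := hder k (Nat.lt_succ_self k)
    have hcontk : ContinuousOn (G k) (Set.Icc u v) :=
      fun s hs => ((hgder s hs).continuousWithinAt)
    have slope := slope_lower hc hgder hcont hlow
    have hxe : (0:ℝ) < x ^ e := Real.rpow_pos_of_pos hx e
    have hcast : (((k+1:ℕ)):ℝ)⁻¹ = e := by rw [hedef]; push_cast; ring
    rcases Set.eq_empty_or_nonempty {s ∈ Set.Icc u v | |G k s| < ρ} with hS | ⟨x₁, hx₁⟩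
    · have hlow' : ∀ s ∈ Set.Icc u v, ρ ≤ |G k s| := by
        intro s hs
        by_contra hcon
        have hmem : s ∈ {s ∈ Set.Icc u v | |G k s| < ρ} := ⟨hs, lt_of_not_ge hcon⟩
        rw [hS] at hmem
        exact hmem
      have bound := IH G u v ρ δ hρ hδ (fun j hj => hder j (hj.trans (Nat.lt_succ_self k)))
        hcontk hlow'
      refine bound.trans (ENNReal.ofReal_le_ofReal ?_)
      rw [alg1, hcast]
      have h4 : (4:ℝ)^k ≤ 4^(k+1) := by
        apply pow_le_pow_right₀ <;> norm_num
      exact mul_le_mul_of_nonneg_right h4 hxe.le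
    · obtain ⟨hx₁I, hgx₁⟩ := hx₁
      set d : ℝ := 2*ρ/c with hddef
      have hd : 0 < d := by positivity
      have hSsub : ∀ s ∈ Set.Icc u v, |G k s| < ρ → |s - x₁| ≤ d := by
        intro s hs hgs
        have h1 := slope s hs x₁ hx₁I
        have h2 : |G k s - G k x₁| ≤ 2*ρ := by
          calc |G k s - G k x₁| ≤ |G k s| + |G k x₁| := abs_sub _ _
            _ ≤ 2*ρ := by linarith
        rw [hddef, le_div_iff₀ hc]; nlinarith [abs_nonneg (s - x₁)]
      have hv : x₁ - 2*d ≤ v := by linarith [hx₁I.2]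
      have hu : u ≤ x₁ + 2*d := by linarith [hx₁I.1]
      have hsubL : Set.Icc u (x₁ - 2*d) ⊆ Set.Icc u v := Set.Icc_subset_Icc_right hv
      have hsubR : Set.Icc (x₁ + 2*d) v ⊆ Set.Icc u v := Set.Icc_subset_Icc_left hu
      have hlowL : ∀ s ∈ Set.Icc u (x₁ - 2*d), ρ ≤ |G k s| := by
        intro s hs
        by_contra hcon
        have := hSsub s (hsubL hs) (lt_of_not_ge hcon)
        rw [abs_le] at this
        linarith [hs.2, this.1]
      have hlowR : ∀ s ∈ Set.Icc (x₁ + 2*d) v, ρ ≤ |G k s| := by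
        intro s hs
        by_contra hcon
        have := hSsub s (hsubR hs) (lt_of_not_ge hcon)
        rw [abs_le] at this
        linarith [hs.1, this.2]
      have hderL : ∀ j < k, ∀ s ∈ Set.Icc u (x₁ - 2*d),
          HasDerivWithinAt (G j) (G (j+1) s) (Set.Icc u (x₁ - 2*d)) s :=
        fun j hj s hs => (hder j (hj.trans (Nat.lt_succ_self k)) s (hsubL hs)).mono hsubL
      have hderR : ∀ j < k, ∀ s ∈ Set.Icc (x₁ + 2*d) v,
          HasDerivWithinAt (G j) (G (j+1) s) (Set.Icc (x₁ + 2*d) v) s :=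
        fun j hj s hs => (hder j (hj.trans (Nat.lt_succ_self k)) s (hsubR hs)).mono hsubR
      have bL := IH G u (x₁ - 2*d) ρ δ hρ hδ hderL (hcontk.mono hsubL) hlowL
      have bR := IH G (x₁ + 2*d) v ρ δ hρ hδ hderR (hcontk.mono hsubR) hlowR
      have hcover : {s ∈ Set.Icc u v | |G 0 s| ≤ δ} ⊆
          ({s ∈ Set.Icc u (x₁ - 2*d) | |G 0 s| ≤ δ} ∪ Set.Icc (x₁ - 2*d) (x₁ + 2*d)) ∪
          {s ∈ Set.Icc (x₁ + 2*d) v | |G 0 s| ≤ δ} := by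
        intro s hs
        rcases le_total s (x₁ - 2*d) with h | h
        · exact Or.inl (Or.inl ⟨⟨hs.1.1, h⟩, hs.2⟩)
        · rcases le_total s (x₁ + 2*d) with h' | h'
          · exact Or.inl (Or.inr ⟨h, h'⟩)
          · exact Or.inr ⟨⟨h', hs.1.2⟩, hs.2⟩
      calc volume {s ∈ Set.Icc u v | |G 0 s| ≤ δ}
          ≤ volume ({s ∈ Set.Icc u (x₁ - 2*d) | |G 0 s| ≤ δ} ∪ Set.Icc (x₁ - 2*d) (x₁ + 2*d))
            + volume {s ∈ Set.Icc (x₁ + 2*d) v | |G 0 s| ≤ δ} :=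
            (measure_mono hcover).trans (measure_union_le _ _)
        _ ≤ (volume {s ∈ Set.Icc u (x₁ - 2*d) | |G 0 s| ≤ δ}
            + volume (Set.Icc (x₁ - 2*d) (x₁ + 2*d)))
            + volume {s ∈ Set.Icc (x₁ + 2*d) v | |G 0 s| ≤ δ} := by
            gcongr
            exact measure_union_le _ _
        _ ≤ (ENNReal.ofReal ((4:ℝ)^k * (δ/ρ) ^ ((k:ℝ)⁻¹)) + ENNReal.ofReal (4*d))
            + ENNReal.ofReal ((4:ℝ)^k * (δ/ρ) ^ ((k:ℝ)⁻¹)) := by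
            gcongr
            rw [Real.volume_Icc]
            apply ENNReal.ofReal_le_ofReal
            linarith
        _ ≤ ENNReal.ofReal ((4:ℝ)^(k+1) * (δ/c) ^ (((k+1:ℕ)):ℝ)⁻¹) := by
            rw [← ENNReal.ofReal_add (by positivity) (by positivity),
              ← ENNReal.ofReal_add (by positivity) (by positivity)]
            apply ENNReal.ofReal_le_ofReal
            rw [alg1, hcast, hddef]
            have h4 : (4:ℝ) ≤ 4^k := by
              calc (4:ℝ) = 4^1 := by norm_num
                _ ≤ 4^k := by apply pow_le_pow_right₀ <;> [norm_num; exact hk]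
            have h8 : 4 * (2*ρ/c) = 8 * (x ^ e) := by
              rw [hρdef]; field_simp; ring
            have hfin : 2*(4:ℝ)^k + 8 ≤ 4^(k+1) := by
              rw [pow_succ]; linarith
            calc (4:ℝ)^k * x^e + 4*(2*ρ/c) + 4^k * x^e = (2*4^k+8) * x^e := by rw [h8]; ring
              _ ≤ 4^(k+1) * x^e := mul_le_mul_of_nonneg_right hfin hxe.le


/-- The Euclidean norm of a vector in `Fin k → ℝ`. -/
noncomputable def euclNorm {k : ℕ} (v : Fin k → ℝ) : ℝ :=
  Real.sqrt (∑ i, (v i) ^ 2)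

set_option maxHeartbeats 1000000 in
theorem stmt_7 (m : ℕ) (hm : 2 ≤ m) (a b : ℝ) (hab : a < b) (f : ℝ → Fin m → ℝ)
    (hf : ContDiffOn ℝ (m : ℕ∞) f (Set.Icc a b))
    (w : ℝ) (hw : 0 < w)
    (hWron : ∀ t ∈ Set.Icc a b,
      w ≤ |(Matrix.of fun i j : Fin m =>
        iteratedDerivWithin ((j : ℕ) + 1) f (Set.Icc a b) t i).det|)
    (hbdd : ∀ k : ℕ, 1 ≤ k → k ≤ m → ∃ M : ℝ, ∀ t ∈ Set.Icc a b,
      euclNorm (iteratedDerivWithin k f (Set.Icc a b) t) ≤ M) :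
    ∃ a' b' : ℝ, a ≤ a' ∧ a' < b' ∧ b' ≤ b ∧ ∃ C : ℝ, 0 < C ∧
      ∀ p : Fin m → ℝ, p ≠ 0 → ∀ δ : ℝ, 0 < δ →
        volume {s ∈ Set.Icc a' b' |
            |∑ i, p i * iteratedDerivWithin 1 f (Set.Icc a b) s i| ≤ δ} ≤
          ENNReal.ofReal (C * (δ / euclNorm p) ^ (((m : ℝ) - 1)⁻¹)) := by
  have hm0 : 0 < m := by omega
  set I : Set ℝ := Set.Icc a b with hI
  have hUD : UniqueDiffOn ℝ I := uniqueDiffOn_Icc hab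
  have haI : a ∈ I := Set.left_mem_Icc.mpr hab.le
  -- continuity and differentiability of iterated derivatives
  have F1 : ∀ n : ℕ, n ≤ m → ContinuousOn (iteratedDerivWithin n f I) I := by
    intro n hn
    exact hf.continuousOn_iteratedDerivWithin (by exact_mod_cast hn) hUD
  have F2 : ∀ n : ℕ, n < m → ∀ t ∈ I, HasDerivWithinAt (iteratedDerivWithin n f I)
      (iteratedDerivWithin (n+1) f I t) I t := by
    intro n hn t ht
    have hdiff := hf.differentiableOn_iteratedDerivWithin (m := n) (by exact_mod_cast hn) hUD
    have h := (hdiff t ht).hasDerivWithinAt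
    rw [iteratedDerivWithin_succ]
    exact h
  -- the chain of scalar functions
  set Gfun : (Fin m → ℝ) → ℕ → ℝ → ℝ :=
    fun p j s => ∑ i, p i * iteratedDerivWithin (j+1) f I s i with hGfun
  have F3 : ∀ (p : Fin m → ℝ) (j : ℕ), j + 1 < m → ∀ s ∈ I,
      HasDerivWithinAt (Gfun p j) (Gfun p (j+1) s) I s := by
    intro p j hj s hs
    have hv := F2 (j+1) hj s hs
    have hcomp := hasDerivWithinAt_pi.mp hv
    exact HasDerivWithinAt.fun_sum (fun i _ => ((hcomp i).const_mul (p i)))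
  have F4 : ∀ (p : Fin m → ℝ) (j : ℕ), j + 1 ≤ m → ContinuousOn (Gfun p j) I := by
    intro p j hj
    apply continuousOn_finset_sum
    intro i _
    exact continuousOn_const.mul ((continuous_apply i).comp_continuousOn (F1 (j+1) hj))
  -- the unit sphere
  set Sp : Set (Fin m → ℝ) := {p | ∑ i, (p i)^2 = 1} with hSp
  have hSpclosed : IsClosed Sp := isClosed_eq (by continuity) continuous_const
  have hsq1 : ∀ p ∈ Sp, ∀ i : Fin m, |p i| ≤ 1 := by
    intro p hp i
    have h1 : (p i)^2 ≤ 1 := by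
      rw [← hp]
      exact Finset.single_le_sum (fun i _ => sq_nonneg (p i)) (Finset.mem_univ i)
    have := sq_abs (p i)
    rw [abs_le]
    constructor <;> nlinarith [abs_nonneg (p i)]
  have hSpcompact : IsCompact Sp := by
    apply Metric.isCompact_of_isClosed_isBounded hSpclosed
    apply Bornology.IsBounded.subset (Metric.isBounded_closedBall (x := (0 : Fin m → ℝ)) (r := 1))
    intro p hp
    rw [Metric.mem_closedBall, dist_zero_right]
    rw [pi_norm_le_iff_of_nonneg zero_le_one]
    intro i
    rw [Real.norm_eq_abs]
    exact hsq1 p hp i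
  have hSpne : Sp.Nonempty := by
    refine ⟨fun i => if i = (⟨0, hm0⟩ : Fin m) then 1 else 0, ?_⟩
    have h1 : ∀ i : Fin m, ((if i = (⟨0, hm0⟩ : Fin m) then (1:ℝ) else 0))^2 =
        if i = (⟨0, hm0⟩ : Fin m) then (1:ℝ) else 0 := by
      intro i; split <;> norm_num
    show (∑ i, _) = (1:ℝ)
    rw [Finset.sum_congr rfl (fun i _ => h1 i)]
    simp
  -- the energy function and its minimum
  set φ : ℝ × (Fin m → ℝ) → ℝ := fun q => ∑ j : Fin m, (Gfun q.2 (j:ℕ) q.1)^2 with hφ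
  have hφcont : ContinuousOn φ (I ×ˢ Sp) := by
    apply continuousOn_finset_sum
    intro j _
    apply ContinuousOn.pow
    apply continuousOn_finset_sum
    intro i _
    apply ContinuousOn.mul
    · exact ((continuous_apply i).comp continuous_snd).continuousOn
    · have h1 := (continuous_apply i).comp_continuousOn (F1 ((j:ℕ)+1) j.isLt)
      exact h1.comp continuousOn_fst (fun q hq => hq.1)
  have hφpos : ∀ q ∈ I ×ˢ Sp, 0 < φ q := by
    rintro ⟨t, p⟩ ⟨ht, hp⟩
    have hnn : 0 ≤ φ (t, p) := Finset.sum_nonneg fun j _ => sq_nonneg _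
    rcases hnn.lt_or_eq with h | h
    · exact h
    · exfalso
      have hzero : ∀ j : Fin m, Gfun p (j:ℕ) t = 0 := by
        intro j
        have h' : (∑ j : Fin m, (Gfun p (j:ℕ) t)^2) = 0 := h.symm
        have h2 := (Finset.sum_eq_zero_iff_of_nonneg
          (fun (j : Fin m) _ => sq_nonneg (Gfun p (j:ℕ) t))).mp h'
        have h3 := h2 j (Finset.mem_univ j)
        exact pow_eq_zero_iff (two_ne_zero) |>.mp h3
      set N : Matrix (Fin m) (Fin m) ℝ :=
        Matrix.of fun i j : Fin m => iteratedDerivWithin ((j:ℕ)+1) f I t i with hN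
      have hp0 : p ≠ 0 := by
        intro h0
        rw [hSp] at hp
        simp only [Set.mem_setOf_eq, h0] at hp
        simp at hp
      have hvm : Matrix.vecMul p N = 0 := by
        funext j
        have h3 := hzero j
        show Matrix.vecMul p N j = 0
        rw [Matrix.vecMul, dotProduct]
        simpa [hN, hGfun] using h3
      have hdet : N.det = 0 := Matrix.exists_vecMul_eq_zero_iff.mp ⟨p, hp0, hvm⟩
      have h4 := hWron t ht
      rw [← hN] at h4
      rw [hdet] at h4
      simp only [abs_zero] at h4
      linarith
  have hKcompact : IsCompact (I ×ˢ Sp) := isCompact_Icc.prod hSpcompact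
  have hKne : (I ×ˢ Sp).Nonempty := (Set.nonempty_Icc.mpr hab.le).prod hSpne
  obtain ⟨q₀, hq₀K, hq₀⟩ := hKcompact.exists_isMinOn hKne hφcont
  set ε₀ : ℝ := φ q₀ with hε₀
  have hε₀pos : 0 < ε₀ := hφpos q₀ hq₀K
  have hmin : ∀ t ∈ I, ∀ p ∈ Sp, ε₀ ≤ φ (t, p) :=
    fun t ht p hp => isMinOn_iff.mp hq₀ (t, p) (Set.mk_mem_prod ht hp)
  set c : ℝ := Real.sqrt ε₀ with hcdef
  have hcpos : 0 < c := Real.sqrt_pos.mpr hε₀pos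
  have hcsq : c^2 = ε₀ := Real.sq_sqrt hε₀pos.le
  have hmR : (0:ℝ) < m := by exact_mod_cast hm0
  have hsqm : 0 < Real.sqrt m := Real.sqrt_pos.mpr hmR
  have hsqmsq : (Real.sqrt m)^2 = m := Real.sq_sqrt hmR.le
  set c₁ : ℝ := c / (2 * Real.sqrt m) with hc₁def
  have hc₁pos : 0 < c₁ := by positivity
  set ε : ℝ := c / (2 * m * Real.sqrt m) with hεdef
  have hεpos : 0 < ε := by positivity
  -- uniform continuity
  set HH : ℝ → (Fin m → Fin m → ℝ) :=
    fun t i j => iteratedDerivWithin ((j:ℕ)+1) f I t i with hHH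
  have hHHcont : ContinuousOn HH I := by
    rw [continuousOn_pi]; intro i
    rw [continuousOn_pi]; intro j
    exact (continuous_apply i).comp_continuousOn (F1 ((j:ℕ)+1) j.isLt)
  have hUC := isCompact_Icc.uniformContinuousOn_of_continuous hHHcont
  obtain ⟨du, hdu, hdux⟩ := Metric.uniformContinuousOn_iff.mp hUC ε hεpos
  set b' : ℝ := min (a + du/2) b with hb'def
  have hab' : a < b' := lt_min (by linarith) hab
  have hb'b : b' ≤ b := min_le_right _ _
  have hsub' : Set.Icc a b' ⊆ I := Set.Icc_subset_Icc_right hb'b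
  have hclose : ∀ s ∈ Set.Icc a b', dist s a < du := by
    intro s hs
    rw [Real.dist_eq, abs_of_nonneg (by linarith [hs.1])]
    have h2 : s ≤ a + du/2 := le_trans hs.2 (min_le_left _ _)
    linarith
  -- variation bound
  have hvar : ∀ p ∈ Sp, ∀ j : Fin m, ∀ s ∈ Set.Icc a b',
      |Gfun p (j:ℕ) s - Gfun p (j:ℕ) a| ≤ c / (2 * Real.sqrt m) := by
    intro p hp j s hs
    have hsI : s ∈ I := hsub' hs
    have hdist := hdux s hsI a haI (hclose s hs)
    have heq : Gfun p (j:ℕ) s - Gfun p (j:ℕ) a = ∑ i, p i * (HH s i j - HH a i j) := by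
      rw [← Finset.sum_sub_distrib]
      exact Finset.sum_congr rfl (fun i _ => by rw [hHH]; ring)
    rw [heq]
    calc |∑ i, p i * (HH s i j - HH a i j)| ≤ ∑ i, |p i * (HH s i j - HH a i j)| :=
          Finset.abs_sum_le_sum_abs _ _
      _ ≤ ∑ _i : Fin m, ε := by
          apply Finset.sum_le_sum
          intro i _
          rw [abs_mul]
          have hpi := hsq1 p hp i
          have hdij : |HH s i j - HH a i j| ≤ ε := by
            have h1 : dist (HH s i) (HH a i) ≤ dist (HH s) (HH a) := dist_le_pi_dist _ _ i
            have h2 : dist (HH s i j) (HH a i j) ≤ dist (HH s i) (HH a i) := dist_le_pi_dist _ _ j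
            rw [Real.dist_eq] at h2
            linarith
          nlinarith [abs_nonneg (p i), abs_nonneg (HH s i j - HH a i j)]
      _ = m * ε := by
          rw [Finset.sum_const, Finset.card_univ, Fintype.card_fin, nsmul_eq_mul]
      _ = c / (2 * Real.sqrt m) := by
          rw [hεdef]; field_simp
  -- for each unit vector, one derivative index dominates on [a, b']
  haveI hneFin : Nonempty (Fin m) := ⟨⟨0, hm0⟩⟩
  have unitbound : ∀ p ∈ Sp, ∃ j : Fin m, ∀ s ∈ Set.Icc a b', c₁ ≤ |Gfun p (j:ℕ) s| := by
    intro p hp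
    have hφa := hmin a haI p hp
    have hex : ∃ j : Fin m, c / Real.sqrt m ≤ |Gfun p (j:ℕ) a| := by
      by_contra hcon
      push_neg at hcon
      have hlt : ∀ j : Fin m, (Gfun p (j:ℕ) a)^2 < c^2 / m := by
        intro j
        have h1 := hcon j
        have h2 : (Gfun p (j:ℕ) a)^2 < (c / Real.sqrt m)^2 := by
          rw [← sq_abs]
          apply sq_lt_sq' _ h1
          have := abs_nonneg (Gfun p (j:ℕ) a)
          have := div_pos hcpos hsqm
          linarith
        have h3 : (c / Real.sqrt m)^2 = c^2 / m := by
          rw [div_pow, hsqmsq]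
        linarith
      have hsum : φ (a, p) < c^2 := by
        calc φ (a, p) = ∑ j : Fin m, (Gfun p (j:ℕ) a)^2 := rfl
          _ < ∑ _j : Fin m, c^2 / m :=
              Finset.sum_lt_sum_of_nonempty Finset.univ_nonempty (fun j _ => hlt j)
          _ = m * (c^2 / m) := by
              rw [Finset.sum_const, Finset.card_univ, Fintype.card_fin, nsmul_eq_mul]
          _ = c^2 := by field_simp
      rw [hcsq] at hsum
      linarith
    obtain ⟨j, hj⟩ := hex
    refine ⟨j, fun s hs => ?_⟩
    have hvarj := hvar p hp j s hs
    have habs : |Gfun p (j:ℕ) a| - |Gfun p (j:ℕ) s| ≤ |Gfun p (j:ℕ) a - Gfun p (j:ℕ) s| :=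
      abs_sub_abs_le_abs_sub _ _
    rw [abs_sub_comm] at habs
    have hkey : c / Real.sqrt m - c / (2 * Real.sqrt m) = c / (2 * Real.sqrt m) := by
      field_simp; ring
    rw [hc₁def]
    linarith
  -- the constants
  set e : ℝ := ((m:ℝ) - 1)⁻¹ with hedef
  have hm2R : (2:ℝ) ≤ m := by exact_mod_cast hm
  have hm1 : (1:ℝ) ≤ (m:ℝ) - 1 := by linarith
  have hepos : 0 < e := by rw [hedef]; apply inv_pos.mpr; linarith
  set θ : ℝ := min c₁ 1 with hθdef
  have hθpos : 0 < θ := lt_min hc₁pos one_pos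
  have hθe : 0 < θ ^ e := Real.rpow_pos_of_pos hθpos e
  set L : ℝ := b' - a with hLdef
  have hLpos : 0 < L := by rw [hLdef]; linarith
  have hc₁e : 0 < c₁ ^ e := Real.rpow_pos_of_pos hc₁pos e
  set C : ℝ := L / θ ^ e + (4:ℝ)^m / c₁ ^ e + 1 with hCdef
  have hCpos : 0 < C := by positivity
  -- the core estimate for unit vectors
  have unitcase : ∀ p ∈ Sp, ∀ δ' : ℝ, 0 < δ' →
      volume {s ∈ Set.Icc a b' | |Gfun p 0 s| ≤ δ'} ≤ ENNReal.ofReal (C * δ' ^ e) := by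
    intro p hp δ' hδ'
    have hδ'e : 0 < δ' ^ e := Real.rpow_pos_of_pos hδ' e
    obtain ⟨j, hj⟩ := unitbound p hp
    rcases le_or_gt c₁ δ' with hcase | hcase
    · -- trivial bound by the length of the interval
      have h1 : volume {s ∈ Set.Icc a b' | |Gfun p 0 s| ≤ δ'} ≤ volume (Set.Icc a b') :=
        measure_mono (fun s hs => hs.1)
      rw [Real.volume_Icc] at h1
      refine h1.trans (ENNReal.ofReal_le_ofReal ?_)
      have hθδ : θ ≤ δ' := le_trans (min_le_left _ _) hcase
      have h2 : θ ^ e ≤ δ' ^ e := Real.rpow_le_rpow hθpos.le hθδ hepos.le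
      have h3 : b' - a = (L / θ^e) * θ^e := by
        rw [hLdef]; field_simp
      rw [h3]
      have h4 : (L / θ^e) * θ^e ≤ (L / θ^e) * δ'^e :=
        mul_le_mul_of_nonneg_left h2 (by positivity)
      refine h4.trans ?_
      have h5 : (0:ℝ) ≤ (4:ℝ)^m / c₁^e + 1 := by positivity
      nlinarith [hδ'e.le]
    · -- δ' < c₁
      rcases Nat.eq_zero_or_pos (j:ℕ) with hj0 | hjpos
      · have hempty : {s ∈ Set.Icc a b' | |Gfun p 0 s| ≤ δ'} = ∅ := by
          ext s
          simp only [Set.mem_setOf_eq, Set.mem_empty_iff_false, iff_false, not_and]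
          intro hs1 hs2
          have := hj s hs1
          rw [hj0] at this
          linarith
        rw [hempty, measure_empty]
        exact zero_le
      · have hjm1 : (j:ℕ) ≤ m - 1 := by omega
        have hder' : ∀ jj < (j:ℕ), ∀ s ∈ Set.Icc a b',
            HasDerivWithinAt (Gfun p jj) (Gfun p (jj+1) s) (Set.Icc a b') s := by
          intro jj hjj s hs
          have hjj1 : jj + 1 < m := by have := j.isLt; omega
          exact (F3 p jj hjj1 s (hsub' hs)).mono hsub'
        have hcont' : ContinuousOn (Gfun p (j:ℕ)) (Set.Icc a b') :=
          (F4 p (j:ℕ) (by have := j.isLt; omega)).mono hsub'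
        have hb := sublevel (j:ℕ) hjpos (Gfun p) a b' c₁ δ' hc₁pos hδ' hder' hcont' hj
        refine hb.trans (ENNReal.ofReal_le_ofReal ?_)
        set y : ℝ := δ' / c₁ with hydef
        have hy0 : 0 < y := div_pos hδ' hc₁pos
        have hy1 : y ≤ 1 := by rw [hydef, div_le_one hc₁pos]; linarith
        have hjR : (0:ℝ) < (j:ℕ) := by exact_mod_cast hjpos
        have hje : e ≤ ((j:ℕ):ℝ)⁻¹ := by
          rw [hedef]
          apply inv_anti₀ hjR
          have : ((j:ℕ):ℝ) ≤ ((m - 1 : ℕ):ℝ) := by exact_mod_cast hjm1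
          have hcast : ((m - 1 : ℕ):ℝ) = (m:ℝ) - 1 := by
            have : (1:ℕ) ≤ m := by omega
            push_cast [this]
            ring
          linarith
        have h1 : y ^ ((j:ℕ):ℝ)⁻¹ ≤ y ^ e := Real.rpow_le_rpow_of_exponent_ge hy0 hy1 hje
        have h2 : y ^ e = δ'^e / c₁^e := Real.div_rpow hδ'.le hc₁pos.le e
        have h3 : (4:ℝ)^(j:ℕ) ≤ 4^m := pow_le_pow_right₀ (by norm_num) (le_of_lt j.isLt)
        have hy_nonneg : 0 ≤ y ^ ((j:ℕ):ℝ)⁻¹ := Real.rpow_nonneg hy0.le _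
        calc (4:ℝ)^(j:ℕ) * y ^ ((j:ℕ):ℝ)⁻¹ ≤ 4^m * y^e := by
              apply mul_le_mul h3 h1 hy_nonneg (by positivity)
          _ = ((4:ℝ)^m / c₁^e) * δ'^e := by rw [h2]; ring
          _ ≤ C * δ'^e := by
              apply mul_le_mul_of_nonneg_right _ hδ'e.le
              rw [hCdef]
              have : 0 ≤ L / θ^e := by positivity
              linarith
  -- conclusion: scale a general p to the unit sphere
  refine ⟨a, b', le_refl a, hab', hb'b, C, hCpos, ?_⟩
  intro p hp δ hδ
  have hnpos : 0 < euclNorm p := by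
    rw [euclNorm]
    apply Real.sqrt_pos.mpr
    obtain ⟨i, hi⟩ := Function.ne_iff.mp hp
    apply Finset.sum_pos' (fun i _ => sq_nonneg _) ⟨i, Finset.mem_univ i, ?_⟩
    have : p i ≠ 0 := hi
    positivity
  set n : ℝ := euclNorm p with hndef
  have hn2 : n^2 = ∑ i, (p i)^2 := by
    rw [hndef, euclNorm]
    exact Real.sq_sqrt (Finset.sum_nonneg fun i _ => sq_nonneg _)
  set u : Fin m → ℝ := fun i => p i / n with hudef
  have huSp : u ∈ Sp := by
    show (∑ i, (u i)^2) = 1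
    have h1 : ∑ i, (u i)^2 = (∑ i, (p i)^2) / n^2 := by
      rw [Finset.sum_div]
      exact Finset.sum_congr rfl (fun i _ => by rw [hudef, div_pow])
    rw [h1, ← hn2]
    field_simp
  have hδ' : 0 < δ / n := div_pos hδ hnpos
  have hseteq : {s ∈ Set.Icc a b' | |∑ i, p i * iteratedDerivWithin 1 f (Set.Icc a b) s i| ≤ δ}
      = {s ∈ Set.Icc a b' | |Gfun u 0 s| ≤ δ / n} := by
    ext s
    simp only [Set.mem_setOf_eq, and_congr_right_iff]
    intro _
    have heq : Gfun u 0 s = (∑ i, p i * iteratedDerivWithin 1 f I s i) / n := by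
      show (∑ i, u i * iteratedDerivWithin (0+1) f I s i) = _
      rw [Finset.sum_div]
      exact Finset.sum_congr rfl (fun i _ => by rw [hudef]; ring)
    rw [heq, abs_div, abs_of_pos hnpos]
    constructor
    · intro h
      exact (div_le_div_iff_of_pos_right hnpos).mpr h
    · intro h
      exact (div_le_div_iff_of_pos_right hnpos).mp h
  rw [hseteq]
  exact unitcase u huSp (δ / n) hδ'
end

section
/- For Q ≥ 1 and an m×n real matrix α, let g_Q = diag(Q^{n/m} I_m, Q^{−1} I_n) and u_α = [[I_m, α],[0, I_n]], and let Λ_Q = g_Q u_α ℤ^{m+n} with polar (dual) lattice Λ_Q* = ((g_Q u_α)^T)^{−1} ℤ^{m+n}. Suppose the transpose α^T is not δ-approximable for a nonincreasing function δ (i.e. ‖q − α^T p‖ ≤ δ(‖p‖) has no solution (p,q) ∈ ℤ^m×ℤ^n with p ≠ 0 beyond finitely many, and never with q − α^T p = 0, p ≠ 0). Set Δ(Q) = (1/2) Q^{−n/m} δ^{−1}(2C₁/Q) for a constant C₁ ≥ 1. Then for all sufficiently large Q, the only point of Λ_Q* in the box {(p,q) ∈ ℝ^m×ℝ^n : ‖p‖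 ≤ 2Δ(Q), ‖q‖ ≤ 2C₁} is the origin. -/
lemma euclNorm_nonneg {k : ℕ} (v : Fin k → ℝ) : 0 ≤ euclNorm v := Real.sqrt_nonneg _

lemma euclNorm_smul {k : ℕ} (c : ℝ) (v : Fin k → ℝ) :
    euclNorm (fun i => c * v i) = |c| * euclNorm v := by
  unfold euclNorm
  rw [← Real.sqrt_sq_eq_abs, ← Real.sqrt_mul (sq_nonneg c), Finset.mul_sum]
  congr 1; exact Finset.sum_congr rfl (fun i _ => by ring)

lemma euclNorm_pos {k : ℕ} {v : Fin k → ℝ} (hv : v ≠ 0) : 0 < euclNorm v := by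
  rw [euclNorm, Real.sqrt_pos]
  obtain ⟨i, hi⟩ := Function.ne_iff.mp hv
  exact Finset.sum_pos' (fun j _ => sq_nonneg _) ⟨i, Finset.mem_univ i, pow_two_pos_of_ne_zero hi⟩

lemma one_le_euclNorm_int {k : ℕ} {w : Fin k → ℤ} (hw : w ≠ 0) :
    1 ≤ euclNorm (fun i => (w i : ℝ)) := by
  obtain ⟨i, hi⟩ := Function.ne_iff.mp hw
  have h1 : (1:ℝ) ≤ ((w i : ℝ))^2 := by
    have h2 : (1:ℤ) ≤ |w i| := Int.one_le_abs hi
    have h3 : (1:ℤ) ≤ (w i)^2 := by nlinarith [sq_abs (w i)]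
    exact_mod_cast h3
  have hsum : (1:ℝ) ≤ ∑ j, ((w j : ℝ))^2 :=
    le_trans h1 (Finset.single_le_sum (f := fun j => ((w j : ℝ))^2) (fun j _ => sq_nonneg _) (Finset.mem_univ i))
  calc (1:ℝ) = Real.sqrt 1 := (Real.sqrt_one).symm
  _ ≤ _ := Real.sqrt_le_sqrt hsum

theorem stmt_8 (m n : ℕ) (hm : 0 < m) (hn : 0 < n) (α : Matrix (Fin m) (Fin n) ℝ)
    (δ : ℝ → ℝ) (hδpos : ∀ x : ℝ, 0 < x → 0 < δ x)
    (hδmono : ∀ x y : ℝ, 0 < x → x ≤ y → δ y ≤ δ x)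
    -- `δinv` is a generalized inverse of the nonincreasing function `δ`
    (δinv : ℝ → ℝ) (hδinvpos : ∀ y : ℝ, 0 < y → 0 < δinv y)
    (hinv : ∀ x y : ℝ, 0 < x → 0 < y → x ≤ δinv y → y ≤ δ x)
    -- `αᵀ` is not `δ`-approximable: only finitely many solutions with `p ≠ 0` ...
    (hfin : {pq : (Fin m → ℤ) × (Fin n → ℤ) | pq.1 ≠ 0 ∧
        euclNorm ((fun j => (pq.2 j : ℝ)) -
            α.transpose.mulVec (fun i => (pq.1 i : ℝ))) ≤
          δ (euclNorm fun i => (pq.1 i : ℝ))}.Finite)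
    -- ... and never an exact solution `q - αᵀ p = 0` with `p ≠ 0`
    (hexact : ∀ (p : Fin m → ℤ) (q : Fin n → ℤ), p ≠ 0 →
        (fun j => (q j : ℝ)) - α.transpose.mulVec (fun i => (p i : ℝ)) ≠ 0)
    (C₁ : ℝ) (hC₁ : 1 ≤ C₁) :
    -- for all sufficiently large `Q`, the only point of the dual lattice
    -- `Λ_Q* ∋ ((g_Q u_α)ᵀ)⁻¹ (p,q) = (Q^{-n/m} p, Q (q - αᵀ p))` in the box
    -- `‖·‖ ≤ 2Δ(Q)` × `‖·‖ ≤ 2C₁`, with `Δ(Q) = ½ Q^{-n/m} δ⁻¹(2C₁/Q)`, is `0`.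
    ∃ Q₀ : ℝ, 1 ≤ Q₀ ∧ ∀ Q : ℝ, Q₀ ≤ Q → ∀ (p : Fin m → ℤ) (q : Fin n → ℤ),
      euclNorm (fun i => Q ^ (-(n : ℝ) / (m : ℝ)) * (p i : ℝ)) ≤
        2 * ((1 / 2) * Q ^ (-(n : ℝ) / (m : ℝ)) * δinv (2 * C₁ / Q)) →
      euclNorm (fun j => Q *
          ((q j : ℝ) - α.transpose.mulVec (fun i => (p i : ℝ)) j)) ≤ 2 * C₁ →
      p = 0 ∧ q = 0 := by
  classical
  set f : (Fin m → ℤ) × (Fin n → ℤ) → ℝ := fun pq =>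
    2 * C₁ / euclNorm ((fun j => (pq.2 j : ℝ)) -
      α.transpose.mulVec (fun i => (pq.1 i : ℝ))) with hf
  set B : ℝ := ∑ pq ∈ hfin.toFinset, max 0 (f pq) with hB
  have hBnn : 0 ≤ B := Finset.sum_nonneg (fun pq _ => le_max_left _ _)
  refine ⟨max (2 * C₁ + 1) (B + 1), le_trans (by linarith) (le_max_left _ _), ?_⟩
  intro Q hQ p q h1 h2
  have hQ1 : 2 * C₁ < Q := lt_of_lt_of_le (lt_add_one _) (le_trans (le_max_left _ _) hQ)
  have hQpos : 0 < Q := by linarith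
  have hQB : B < Q := lt_of_lt_of_le (lt_add_one _) (le_trans (le_max_right _ _) hQ)
  -- rewrite h2
  have h2' : Q * euclNorm ((fun j => (q j : ℝ)) -
      α.transpose.mulVec (fun i => (p i : ℝ))) ≤ 2 * C₁ := by
    have := euclNorm_smul Q ((fun j => (q j : ℝ)) -
      α.transpose.mulVec (fun i => (p i : ℝ)))
    rw [abs_of_pos hQpos] at this
    rw [← this]
    convert h2 using 2
    rfl
  by_cases hp : p = 0
  · subst hp
    constructor
    · rfl
    · by_contra hq
      have hmv : α.transpose.mulVec (fun i => (((0 : Fin m → ℤ) i : ℝ))) = 0 := by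
        convert Matrix.mulVec_zero α.transpose using 2
        ext i; simp
      rw [hmv, sub_zero] at h2'
      have h1q : 1 ≤ euclNorm (fun j => ((q j : ℝ))) := one_le_euclNorm_int hq
      nlinarith
  · exfalso
    -- p ≠ 0 case
    have hr : ((fun j => (q j : ℝ)) - α.transpose.mulVec (fun i => (p i : ℝ))) ≠ 0 :=
      hexact p q hp
    have hrpos := euclNorm_pos hr
    have hppos : (0:ℝ) < euclNorm (fun i => ((p i : ℝ))) := by
      have := one_le_euclNorm_int hp; linarith
    -- from h1: ‖p‖ ≤ δinv(2C₁/Q)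
    have hepos : (0:ℝ) < Q ^ (-(n : ℝ) / (m : ℝ)) := Real.rpow_pos_of_pos hQpos _
    have h1' : euclNorm (fun i => ((p i : ℝ))) ≤ δinv (2 * C₁ / Q) := by
      have hs := euclNorm_smul (Q ^ (-(n : ℝ) / (m : ℝ))) (fun i => ((p i : ℝ)))
      rw [abs_of_pos hepos] at hs
      rw [hs] at h1
      have : Q ^ (-(n : ℝ) / (m : ℝ)) * euclNorm (fun i => ((p i : ℝ))) ≤
          Q ^ (-(n : ℝ) / (m : ℝ)) * δinv (2 * C₁ / Q) := by linarith
      exact le_of_mul_le_mul_left (by linarith) hepos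
    have hy : (0:ℝ) < 2 * C₁ / Q := by positivity
    have hδle : 2 * C₁ / Q ≤ δ (euclNorm (fun i => ((p i : ℝ)))) :=
      hinv _ _ hppos hy h1'
    -- ‖r‖ ≤ 2C₁/Q
    have hrle : euclNorm ((fun j => (q j : ℝ)) -
        α.transpose.mulVec (fun i => (p i : ℝ))) ≤ 2 * C₁ / Q := by
      rw [le_div_iff₀ hQpos]; linarith [h2']
    have hmem : (p, q) ∈ hfin.toFinset := by
      rw [Set.Finite.mem_toFinset]
      exact ⟨hp, le_trans hrle hδle⟩
    have hfle : f (p, q) ≤ B := by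
      refine le_trans (le_max_right 0 _) ?_
      exact Finset.single_le_sum (f := fun pq => max 0 (f pq)) (fun pq _ => le_max_left _ _) hmem
    have hQf : Q ≤ f (p, q) := by
      rw [hf]
      rw [le_div_iff₀ hrpos]
      calc Q * euclNorm ((fun j => (q j : ℝ)) -
          α.transpose.mulVec (fun i => (p i : ℝ))) ≤ 2 * C₁ := h2'
      _ ≤ 2 * C₁ := le_refl _
    linarith
end

section
/- Let α be a very singular m×n matrix with exponent ε > 0 (i.e. ‖αq + p‖ ≤ Q^{−(n/m+ε)} and 0 < ‖q‖ ≤ Q is solvable in integers for all large Q). Let δ > 0 satisfy δ·n/m − ε ≤ −δ. Then for all sufficiently large Q, the lattice Λ_{Q^{1+δ}} = g_{Q^{1+δ}} u_α ℤ^{m+n} contains a nonzero vector of norm ≲ Q^{−δ}; consequently λ₁(Λ_{Q^{1+δ}}) ≲ Q^{−δ}. -/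
theorem stmt_12 (m n : ℕ) (hm : 0 < m) (hn : 0 < n) (α : Matrix (Fin m) (Fin n) ℝ)
    (ε Qε : ℝ) (hε : 0 < ε) (hQε : 1 ≤ Qε)
    -- `α` is very singular with exponent `ε`
    (hsing : ∀ Q : ℝ, Qε ≤ Q → ∃ (p : Fin m → ℤ) (q : Fin n → ℤ),
      euclNorm (α.mulVec (fun j => (q j : ℝ)) + (fun i => (p i : ℝ))) ≤
        Q ^ (-((n : ℝ) / (m : ℝ) + ε)) ∧
      0 < euclNorm (fun j => (q j : ℝ)) ∧ euclNorm (fun j => (q j : ℝ)) ≤ Q)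
    (δ : ℝ) (hδ : 0 < δ) (hδε : δ * (n : ℝ) / (m : ℝ) - ε ≤ -δ) :
    -- then for all large `Q` the lattice `Λ_{Q^{1+δ}}`, with points
    -- `g_{Q^{1+δ}} u_α (p,q) = ((Q^{1+δ})^{n/m}(αq+p), (Q^{1+δ})⁻¹ q)`,
    -- contains a nonzero vector of norm `≲ Q^{-δ}`
    ∃ C : ℝ, 0 < C ∧ ∃ Q₀ : ℝ, 1 ≤ Q₀ ∧ ∀ Q : ℝ, Q₀ ≤ Q →
      ∃ (p : Fin m → ℤ) (q : Fin n → ℤ), ¬(p = 0 ∧ q = 0) ∧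
        euclNorm (fun i => (Q ^ ((1 : ℝ) + δ)) ^ ((n : ℝ) / (m : ℝ)) *
            (α.mulVec (fun j => (q j : ℝ)) i + (p i : ℝ))) ≤ C * Q ^ (-δ) ∧
        euclNorm (fun j => (Q ^ ((1 : ℝ) + δ))⁻¹ * (q j : ℝ)) ≤ C * Q ^ (-δ) := by
  refine ⟨1, one_pos, max Qε 1, le_max_right _ _, fun Q hQ => ?_⟩
  have hQ1 : (1 : ℝ) ≤ Q := le_trans (le_max_right _ _) hQ
  have hQ0 : (0 : ℝ) < Q := lt_of_lt_of_le one_pos hQ1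
  obtain ⟨p, q, h1, h2, h3⟩ := hsing Q (le_trans (le_max_left _ _) hQ)
  have hqne : ¬(p = 0 ∧ q = 0) := by
    rintro ⟨-, rfl⟩
    simp [euclNorm] at h2
  refine ⟨p, q, hqne, ?_, ?_⟩
  · have key : (Q ^ ((1 : ℝ) + δ)) ^ ((n : ℝ) / (m : ℝ)) =
        Q ^ (((1 : ℝ) + δ) * ((n : ℝ) / (m : ℝ))) := by
      rw [← Real.rpow_mul hQ0.le]
    have hpos : (0 : ℝ) ≤ Q ^ (((1 : ℝ) + δ) * ((n : ℝ) / (m : ℝ))) :=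
      (Real.rpow_pos_of_pos hQ0 _).le
    rw [euclNorm_smul, key, abs_of_nonneg hpos, one_mul]
    calc Q ^ (((1 : ℝ) + δ) * ((n : ℝ) / (m : ℝ))) *
          euclNorm (fun i => α.mulVec (fun j => (q j : ℝ)) i + (p i : ℝ))
        ≤ Q ^ (((1 : ℝ) + δ) * ((n : ℝ) / (m : ℝ))) * Q ^ (-((n : ℝ) / (m : ℝ) + ε)) := by
          apply mul_le_mul_of_nonneg_left _ hpos
          exact h1
      _ = Q ^ (((1 : ℝ) + δ) * ((n : ℝ) / (m : ℝ)) + -((n : ℝ) / (m : ℝ) + ε)) := by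
          rw [← Real.rpow_add hQ0]
      _ ≤ Q ^ (-δ) := by
          apply Real.rpow_le_rpow_of_exponent_le hQ1
          have : ((1 : ℝ) + δ) * ((n : ℝ) / (m : ℝ)) + -((n : ℝ) / (m : ℝ) + ε) =
              δ * (n : ℝ) / (m : ℝ) - ε := by ring
          rw [this]; exact hδε
  · rw [euclNorm_smul, one_mul]
    have h4 : |(Q ^ ((1 : ℝ) + δ))⁻¹| = Q ^ (-(1 + δ)) := by
      rw [abs_of_nonneg (inv_nonneg.mpr (Real.rpow_pos_of_pos hQ0 _).le),
        ← Real.rpow_neg hQ0.le]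
    rw [h4]
    calc Q ^ (-(1 + δ)) * euclNorm (fun j => (q j : ℝ))
        ≤ Q ^ (-(1 + δ)) * Q := by
          exact mul_le_mul_of_nonneg_left h3 (Real.rpow_pos_of_pos hQ0 _).le
      _ = Q ^ (-(1 + δ) + 1) := by
          rw [Real.rpow_add_one hQ0.ne']
      _ = Q ^ (-δ) := by norm_num
end

section
/- Fix 0 < ε < 1 and let α be an m×n real matrix such that ‖αq + p‖ > ε‖q‖^{−n/m} for all (p,q) ∈ ℤ^m × (ℤ^n \ {0}). Then for all Q ≥ 1 and all β ∈ ℝ^m, there is at most one pair (p,q) ∈ ℤ^m × ℤ^n satisfying ‖αq + p + β‖ ≤ (1/2)·ε·Q^{−n/m} and ‖q‖ ≤ (1/2)Q. -/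
lemma euclNorm_eq {k : ℕ} (v : Fin k → ℝ) :
    euclNorm v = ‖(WithLp.equiv 2 (Fin k → ℝ)).symm v‖ := by
  rw [EuclideanSpace.norm_eq]
  simp [euclNorm, Real.norm_eq_abs, sq_abs]

lemma euclNorm_sub_le {k : ℕ} (a b : Fin k → ℝ) :
    euclNorm (a - b) ≤ euclNorm a + euclNorm b := by
  simp only [euclNorm_eq]
  exact norm_sub_le _ _

lemma euclNorm_int_ge_one {k : ℕ} (q : Fin k → ℤ) (hq : q ≠ 0) :
    1 ≤ euclNorm fun j => (q j : ℝ) := by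
  obtain ⟨j, hj⟩ := Function.ne_iff.mp hq
  have h1 : (1 : ℝ) ≤ |(q j : ℝ)| := by
    have : 1 ≤ |q j| := Int.one_le_abs (by simpa using hj)
    exact_mod_cast this
  calc (1 : ℝ) ≤ |(q j : ℝ)| := h1
    _ = Real.sqrt ((q j : ℝ) ^ 2) := (Real.sqrt_sq_eq_abs _).symm
    _ ≤ euclNorm fun j => (q j : ℝ) := by
        apply Real.sqrt_le_sqrt
        exact Finset.single_le_sum (f := fun i => ((q i : ℝ)) ^ 2)
          (fun i _ => sq_nonneg _) (Finset.mem_univ j)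

theorem stmt_13 (m n : ℕ) (hm : 0 < m) (hn : 0 < n) (α : Matrix (Fin m) (Fin n) ℝ)
    (ε : ℝ) (hε0 : 0 < ε) (hε1 : ε < 1)
    (hbad : ∀ (p : Fin m → ℤ) (q : Fin n → ℤ), q ≠ 0 →
      ε * (euclNorm fun j => (q j : ℝ)) ^ (-(n : ℝ) / (m : ℝ)) <
        euclNorm (α.mulVec (fun j => (q j : ℝ)) + (fun i => (p i : ℝ)))) :
    ∀ Q : ℝ, 1 ≤ Q → ∀ β : Fin m → ℝ,
      ∀ (p₁ : Fin m → ℤ) (q₁ : Fin n → ℤ) (p₂ : Fin m → ℤ) (q₂ : Fin n → ℤ),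
        euclNorm (α.mulVec (fun j => (q₁ j : ℝ)) + (fun i => (p₁ i : ℝ)) + β) ≤
          (1 / 2) * ε * Q ^ (-(n : ℝ) / (m : ℝ)) →
        euclNorm (fun j => (q₁ j : ℝ)) ≤ (1 / 2) * Q →
        euclNorm (α.mulVec (fun j => (q₂ j : ℝ)) + (fun i => (p₂ i : ℝ)) + β) ≤
          (1 / 2) * ε * Q ^ (-(n : ℝ) / (m : ℝ)) →
        euclNorm (fun j => (q₂ j : ℝ)) ≤ (1 / 2) * Q →
        p₁ = p₂ ∧ q₁ = q₂ := by
  intro Q hQ β p₁ q₁ p₂ q₂ h1 hq1 h2 hq2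
  set e : ℝ := -(n : ℝ) / (m : ℝ) with he
  have he_neg : e < 0 := by
    apply div_neg_of_neg_of_pos
    · simpa using (Nat.cast_pos.mpr hn : (0:ℝ) < n)
    · exact_mod_cast hm
  -- difference vector bound
  have hdiff : euclNorm (α.mulVec (fun j => ((q₁ j - q₂ j : ℤ) : ℝ)) +
      (fun i => ((p₁ i - p₂ i : ℤ) : ℝ))) ≤ ε * Q ^ e := by
    have hveq : α.mulVec (fun j => ((q₁ j - q₂ j : ℤ) : ℝ)) +
        (fun i => ((p₁ i - p₂ i : ℤ) : ℝ)) =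
        (α.mulVec (fun j => (q₁ j : ℝ)) + (fun i => (p₁ i : ℝ)) + β) -
        (α.mulVec (fun j => (q₂ j : ℝ)) + (fun i => (p₂ i : ℝ)) + β) := by
      funext i
      simp [Matrix.mulVec, dotProduct, Pi.add_apply, Pi.sub_apply,
        Int.cast_sub, mul_sub, Finset.sum_sub_distrib]
      ring
    rw [hveq]
    calc _ ≤ _ + _ := euclNorm_sub_le _ _
      _ ≤ (1/2) * ε * Q ^ e + (1/2) * ε * Q ^ e := add_le_add h1 h2
      _ = ε * Q ^ e := by ring
  have hQpos : (0:ℝ) < Q := lt_of_lt_of_le one_pos hQ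
  have hQe_le_one : Q ^ e ≤ 1 := Real.rpow_le_one_of_one_le_of_nonpos hQ he_neg.le
  have hqeq : q₁ = q₂ := by
    by_contra hne
    have hq0 : q₁ - q₂ ≠ 0 := sub_ne_zero.mpr hne
    have hb := hbad (p₁ - p₂) (q₁ - q₂) hq0
    simp only [Pi.sub_apply] at hb
    have hnq1 : (1:ℝ) ≤ euclNorm fun j => ((q₁ j - q₂ j : ℤ) : ℝ) := by
      have := euclNorm_int_ge_one (q₁ - q₂) hq0
      simpa using this
    -- ‖q₁ - q₂‖ ≤ Q
    have hsum : (euclNorm fun j => ((q₁ j - q₂ j : ℤ) : ℝ)) ≤ Q := by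
      have heq : (fun j => ((q₁ j - q₂ j : ℤ) : ℝ)) =
          (fun j => (q₁ j : ℝ)) - fun j => (q₂ j : ℝ) := by
        funext j; simp
      rw [heq]
      calc _ ≤ _ + _ := euclNorm_sub_le _ _
        _ ≤ (1/2)*Q + (1/2)*Q := add_le_add hq1 hq2
        _ = Q := by ring
    have hanti : Q ^ e ≤ (euclNorm fun j => ((q₁ j - q₂ j : ℤ) : ℝ)) ^ e :=
      Real.rpow_le_rpow_of_nonpos (lt_of_lt_of_le one_pos hnq1) hsum he_neg.le
    have : ε * Q ^ e < ε * Q ^ e :=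
      lt_of_lt_of_le (lt_of_le_of_lt (mul_le_mul_of_nonneg_left hanti hε0.le)
        (by simpa using hb)) hdiff
    exact lt_irrefl _ this
  refine ⟨?_, hqeq⟩
  by_contra hpne
  have hp0 : p₁ - p₂ ≠ 0 := sub_ne_zero.mpr hpne
  have h1' : (1:ℝ) ≤ euclNorm fun i => ((p₁ i - p₂ i : ℤ) : ℝ) := by
    have := euclNorm_int_ge_one (p₁ - p₂) hp0
    simpa using this
  have hcancel : (α.mulVec (fun j => ((q₁ j - q₂ j : ℤ) : ℝ)) +
      (fun i => ((p₁ i - p₂ i : ℤ) : ℝ))) = fun i => ((p₁ i - p₂ i : ℤ) : ℝ) := by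
    subst hqeq
    funext i
    simp [Matrix.mulVec, dotProduct]
  rw [hcancel] at hdiff
  have : (1:ℝ) < 1 :=
    lt_of_le_of_lt (le_trans h1' hdiff)
      (lt_of_le_of_lt (mul_le_of_le_one_right hε0.le hQe_le_one) hε1)
  exact lt_irrefl _ this
end

section
/- Let I ⊆ ℝ be an interval and (S'_Q)_{Q ∈ Q} a family of Lebesgue measurable subsets of ℝ indexed by a countable set Q ⊆ ℝ. Suppose there are constants C, c > 0 and finite subsets Q_k ⊆ Q ∩ [k,∞) such that for all sufficiently large k: (i) ∑_{Q ∈ Q_k} |S'_Q ∩ I|/|I| ≥ c, and (ii) ∑_{Q₁ < Q₂, Q₁,Q₂ ∈ Q_k} |S'_{Q₁} ∩ S'_{Q₂} ∩ I|/|I| ≤ C·(∑_{Q ∈ Q_k} |S'_Q ∩ I|/|I|)². Then |limsup_{Q→∞} S'_Q ∩ I|/|I| ≥ 1/(2C + c^{−1}). -/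
open MeasureTheory
open scoped ENNReal

theorem chung_erdos {α : Type*} [MeasurableSpace α] (μ : Measure α) [IsFiniteMeasure μ]
    {ι : Type*} (F : Finset ι) (A : ι → Set α) (hA : ∀ i, MeasurableSet (A i)) :
    (∑ i ∈ F, μ (A i)) ^ 2 ≤
      (∑ p ∈ F ×ˢ F, μ (A p.1 ∩ A p.2)) * μ (⋃ i ∈ F, A i) := by
  classical
  set U : Set α := ⋃ i ∈ F, A i with hU
  have hUm : MeasurableSet U := MeasurableSet.biUnion F.countable_toSet (fun i _ => hA i)
  set f : α → ℝ≥0∞ := fun x => ∑ i ∈ F, (A i).indicator 1 x with hf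
  have hfm : Measurable f := Finset.measurable_sum _ (fun i _ =>
    (measurable_const).indicator (hA i))
  set g : α → ℝ≥0∞ := fun x => U.indicator 1 x with hg
  have hgm : Measurable g := (measurable_const).indicator hUm
  have hfg : ∀ x, f x * g x = f x := by
    intro x
    by_cases hx : x ∈ U
    · simp [hg, Set.indicator_of_mem hx]
    · have : f x = 0 := by
        apply Finset.sum_eq_zero
        intro i hi
        have : x ∉ A i := fun h => hx (Set.mem_biUnion hi h)
        simp [Set.indicator_of_notMem this]
      simp [this]
  have hint_f : ∫⁻ x, f x ∂μ = ∑ i ∈ F, μ (A i) := by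
    simp only [hf]
    rw [lintegral_finset_sum (f := fun i x => (A i).indicator 1 x) F
      (fun i _ => (measurable_const).indicator (hA i))]
    exact Finset.sum_congr rfl fun i _ => lintegral_indicator_one (hA i)
  have hint_f2 : ∫⁻ x, f x * f x ∂μ = ∑ p ∈ F ×ˢ F, μ (A p.1 ∩ A p.2) := by
    have hprod : ∀ x, f x * f x = ∑ p ∈ F ×ˢ F, (A p.1 ∩ A p.2).indicator 1 x := by
      intro x
      rw [hf, Finset.sum_mul_sum, ← Finset.sum_product']
      refine Finset.sum_congr rfl fun p _ => ?_
      rw [Set.inter_indicator_one]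
      rfl
    simp_rw [hprod]
    rw [lintegral_finset_sum (f := fun (p : ι × ι) x => (A p.1 ∩ A p.2).indicator 1 x) (F ×ˢ F)
      (fun p _ => (measurable_const).indicator ((hA p.1).inter (hA p.2)))]
    exact Finset.sum_congr rfl fun p _ => lintegral_indicator_one ((hA p.1).inter (hA p.2))
  have hint_g2 : ∫⁻ x, g x * g x ∂μ = μ U := by
    have : ∀ x, g x * g x = g x := by
      intro x
      by_cases hx : x ∈ U <;> simp [hg, Set.indicator_of_mem, Set.indicator_of_notMem, hx]
    simp_rw [this, hg]
    exact lintegral_indicator_one hUm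
  have hpq : Real.HolderConjugate 2 2 := Real.HolderConjugate.two_two
  have holder := ENNReal.lintegral_mul_le_Lp_mul_Lq μ hpq hfm.aemeasurable hgm.aemeasurable
  have h2 : ∀ h : α → ℝ≥0∞, (fun x => h x ^ (2:ℝ)) = fun x => h x * h x := by
    intro h; funext x; rw [show (2:ℝ) = ((2:ℕ):ℝ) by norm_num, ENNReal.rpow_natCast]; ring
  rw [show (fun x => (f * g) x) = fun x => f x * g x from rfl] at holder
  simp_rw [hfg] at holder
  rw [h2 f, h2 g, hint_f, hint_f2, hint_g2] at holder
  calc (∑ i ∈ F, μ (A i)) ^ 2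
      ≤ ((∑ p ∈ F ×ˢ F, μ (A p.1 ∩ A p.2)) ^ (1/2:ℝ) * μ U ^ (1/2:ℝ)) ^ 2 := by
        exact pow_le_pow_left' holder 2
    _ = (∑ p ∈ F ×ˢ F, μ (A p.1 ∩ A p.2)) * μ U := by
        rw [mul_pow]
        congr 1 <;>
        · rw [← ENNReal.rpow_natCast _ 2, ← ENNReal.rpow_mul]
          norm_num

set_option maxHeartbeats 1000000 in
theorem stmt_16 (QQ : Set ℝ) (hQQ : QQ.Countable) (S' : ℝ → Set ℝ)
    (hmeas : ∀ Q : ℝ, MeasurableSet (S' Q))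
    (a b : ℝ) (hab : a < b) (C c : ℝ) (hC : 0 < C) (hc : 0 < c)
    (Qk : ℕ → Finset ℝ) (hQk : ∀ k : ℕ, ↑(Qk k) ⊆ QQ ∩ Set.Ici (k : ℝ))
    (k₀ : ℕ)
    (h1 : ∀ k : ℕ, k₀ ≤ k →
      c ≤ ∑ Q ∈ Qk k, (volume (S' Q ∩ Set.Icc a b)).toReal / (b - a))
    (h2 : ∀ k : ℕ, k₀ ≤ k →
      ∑ P ∈ (Qk k ×ˢ Qk k).filter (fun P => P.1 < P.2),
          (volume (S' P.1 ∩ S' P.2 ∩ Set.Icc a b)).toReal / (b - a) ≤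
        C * (∑ Q ∈ Qk k, (volume (S' Q ∩ Set.Icc a b)).toReal / (b - a)) ^ 2) :
    1 / (2 * C + c⁻¹) ≤
      (volume ({x : ℝ | ∀ N : ℝ, ∃ Q ∈ QQ, N ≤ Q ∧ x ∈ S' Q} ∩
          Set.Icc a b)).toReal / (b - a) := by
  classical
  set L : ℝ := b - a with hLdef
  have hL : 0 < L := sub_pos.2 hab
  have hden : 0 < 2 * C + c⁻¹ := by positivity
  set μ : Measure ℝ := volume.restrict (Set.Icc a b) with hμ
  haveI : IsFiniteMeasure μ := by
    constructor
    rw [hμ, Measure.restrict_apply_univ, Real.volume_Icc]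
    exact ENNReal.ofReal_lt_top
  have hvol : ∀ s : Set ℝ, MeasurableSet s → volume (s ∩ Set.Icc a b) = μ s := by
    intro s hs
    rw [hμ, Measure.restrict_apply hs]
  set U : ℕ → Set ℝ := fun k => ⋃ i ∈ Qk k, S' i with hUdef
  have hUm : ∀ k, MeasurableSet (U k) := fun k =>
    MeasurableSet.biUnion (Qk k).countable_toSet (fun i _ => hmeas i)
  -- per-k lower bound
  have key : ∀ k : ℕ, k₀ ≤ k → ENNReal.ofReal (L / (2 * C + c⁻¹)) ≤ μ (U k) := by
    intro k hk
    set F := Qk k with hF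
    set s : ℝ := ∑ i ∈ F, (μ (S' i)).toReal with hs
    set P : ℝ := ∑ p ∈ (F ×ˢ F).filter (fun p => p.1 < p.2),
      (μ (S' p.1 ∩ S' p.2)).toReal with hP
    set m : ℝ := (μ (U k)).toReal with hm
    have hm0 : 0 ≤ m := ENNReal.toReal_nonneg
    -- translate h1
    have h1' : c * L ≤ s := by
      have h := h1 k hk
      rw [← Finset.sum_div] at h
      have heq : ∑ Q ∈ F, (volume (S' Q ∩ Set.Icc a b)).toReal = s :=
        Finset.sum_congr rfl fun Q _ => by rw [hvol _ (hmeas Q)]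
      rw [heq] at h
      have := (le_div_iff₀ hL).1 h
      linarith
    have hs_pos : 0 < s := lt_of_lt_of_le (by positivity) h1'
    -- translate h2
    have h2' : P ≤ C * s ^ 2 / L := by
      have h := h2 k hk
      rw [← Finset.sum_div, ← Finset.sum_div] at h
      have heq : ∑ Q ∈ F, (volume (S' Q ∩ Set.Icc a b)).toReal = s :=
        Finset.sum_congr rfl fun Q _ => by rw [hvol _ (hmeas Q)]
      have heq2 : ∑ p ∈ (F ×ˢ F).filter (fun p => p.1 < p.2),
          (volume (S' p.1 ∩ S' p.2 ∩ Set.Icc a b)).toReal = P :=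
        Finset.sum_congr rfl fun p _ => by rw [hvol _ ((hmeas p.1).inter (hmeas p.2))]
      rw [heq, heq2] at h
      -- h : P / L ≤ C * (s / L) ^ 2
      have hP_nonneg : 0 ≤ P := Finset.sum_nonneg fun _ _ => ENNReal.toReal_nonneg
      rw [div_pow, div_le_iff₀ hL] at h
      have hL0 : L ≠ 0 := hL.ne'
      calc P ≤ C * (s ^ 2 / L ^ 2) * L := h
        _ = C * s ^ 2 / L := by field_simp
    -- Chung–Erdős and decomposition
    have hCE := chung_erdos μ F S' hmeas
    have hTne : (∑ p ∈ F ×ˢ F, μ (S' p.1 ∩ S' p.2)) ≠ ∞ :=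
      ENNReal.sum_ne_top.2 fun _ _ => measure_ne_top μ _
    have hreal : s ^ 2 ≤ (∑ p ∈ F ×ˢ F, (μ (S' p.1 ∩ S' p.2)).toReal) * m := by
      have hmono := ENNReal.toReal_mono
        (ENNReal.mul_ne_top hTne (measure_ne_top μ _)) hCE
      rw [ENNReal.toReal_pow, ENNReal.toReal_mul,
        ENNReal.toReal_sum (fun _ _ => measure_ne_top μ _),
        ENNReal.toReal_sum (fun _ _ => measure_ne_top μ _)] at hmono
      exact hmono
    -- double sum = s + 2 P
    have hTR : ∑ p ∈ F ×ˢ F, (μ (S' p.1 ∩ S' p.2)).toReal = s + 2 * P := by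
      set r : ℝ × ℝ → ℝ := fun p => (μ (S' p.1 ∩ S' p.2)).toReal with hr
      rw [← Finset.sum_filter_add_sum_filter_not (F ×ˢ F) (fun p => p.1 < p.2) r,
        ← Finset.sum_filter_add_sum_filter_not ((F ×ˢ F).filter (fun p => ¬ p.1 < p.2))
          (fun p => p.2 < p.1) r]
      have hgt : ∑ p ∈ ((F ×ˢ F).filter (fun p => ¬ p.1 < p.2)).filter (fun p => p.2 < p.1),
          r p = P := by
        refine Finset.sum_nbij' (fun p => (p.2, p.1)) (fun p => (p.2, p.1)) ?_ ?_
          (fun p _ => rfl) (fun p _ => rfl) ?_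
        · intro p hp
          obtain ⟨hp1, hp2⟩ := Finset.mem_filter.1 hp
          obtain ⟨hp3, _⟩ := Finset.mem_filter.1 hp1
          obtain ⟨ha1, ha2⟩ := Finset.mem_product.1 hp3
          exact Finset.mem_filter.2 ⟨Finset.mem_product.2 ⟨ha2, ha1⟩, hp2⟩
        · intro p hp
          obtain ⟨hp1, hp2⟩ := Finset.mem_filter.1 hp
          obtain ⟨ha1, ha2⟩ := Finset.mem_product.1 hp1
          exact Finset.mem_filter.2 ⟨Finset.mem_filter.2
            ⟨Finset.mem_product.2 ⟨ha2, ha1⟩, not_lt.2 (le_of_lt hp2)⟩, hp2⟩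
        · intro p _
          simp only [hr]
          rw [Set.inter_comm]
      have heqd : ∑ p ∈ ((F ×ˢ F).filter (fun p => ¬ p.1 < p.2)).filter (fun p => ¬ p.2 < p.1),
          r p = s := by
        refine Finset.sum_nbij' (fun p => p.1) (fun i => (i, i)) ?_ ?_ ?_ (fun i _ => rfl) ?_
        · intro p hp
          obtain ⟨hp1, hp2⟩ := Finset.mem_filter.1 hp
          obtain ⟨hp3, _⟩ := Finset.mem_filter.1 hp1
          exact (Finset.mem_product.1 hp3).1
        · intro i hi
          exact Finset.mem_filter.2 ⟨Finset.mem_filter.2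
            ⟨Finset.mem_product.2 ⟨hi, hi⟩, lt_irrefl _⟩, lt_irrefl _⟩
        · intro p hp
          obtain ⟨hp1, hp2⟩ := Finset.mem_filter.1 hp
          obtain ⟨hp3, hp4⟩ := Finset.mem_filter.1 hp1
          have hpe : p.1 = p.2 := le_antisymm (not_lt.1 hp2) (not_lt.1 hp4)
          show (p.1, p.1) = p
          rw [Prod.ext_iff]
          exact ⟨rfl, hpe⟩
        · intro p hp
          obtain ⟨hp1, hp2⟩ := Finset.mem_filter.1 hp
          obtain ⟨hp3, hp4⟩ := Finset.mem_filter.1 hp1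
          have hpe : p.1 = p.2 := le_antisymm (not_lt.1 hp2) (not_lt.1 hp4)
          simp only [hr, ← hpe, Set.inter_self]
      rw [hgt, heqd, ← hP]
      ring
    rw [hTR] at hreal
    clear_value s P m
    -- conclude m ≥ L / (2C + c⁻¹)
    have hmain : L / (2 * C + c⁻¹) ≤ m := by
      have hD : 0 < s + 2 * (C * s ^ 2 / L) := by positivity
      have h3 : s ^ 2 ≤ (s + 2 * (C * s ^ 2 / L)) * m := by nlinarith
      rw [div_le_iff₀ hden]
      have hcinv : (0:ℝ) < c⁻¹ := inv_pos.2 hc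
      have key1 : L * s ≤ s ^ 2 * c⁻¹ := by
        have h4 := mul_le_mul_of_nonneg_right
          (mul_le_mul_of_nonneg_right h1' hs_pos.le) hcinv.le
        have hc0 : c ≠ 0 := hc.ne'
        calc L * s = c * L * s * c⁻¹ := by field_simp
          _ ≤ s * s * c⁻¹ := h4
          _ = s ^ 2 * c⁻¹ := by ring
      have key2 : L * (s + 2 * (C * s ^ 2 / L)) ≤ s ^ 2 * (2 * C + c⁻¹) := by
        have hLX : L * (2 * (C * s ^ 2 / L)) = 2 * C * s ^ 2 := by
          field_simp
        nlinarith [key1, hLX]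
      have hm2 : s ^ 2 / (s + 2 * (C * s ^ 2 / L)) ≤ m := (div_le_iff₀ hD).2 (by linarith)
      have hstep : L ≤ s ^ 2 / (s + 2 * (C * s ^ 2 / L)) * (2 * C + c⁻¹) := by
        rw [div_mul_eq_mul_div, le_div_iff₀ hD]
        calc L * (s + 2 * (C * s ^ 2 / L)) ≤ s ^ 2 * (2 * C + c⁻¹) := key2
          _ = s ^ 2 * (2 * C + c⁻¹) := rfl
      exact le_trans hstep (mul_le_mul_of_nonneg_right hm2 hden.le)
    rw [hm] at hmain
    exact ENNReal.ofReal_le_of_le_toReal hmain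
  -- limsup step
  set T : ℕ → Set ℝ := fun n => ⋃ (k : ℕ) (_ : n ≤ k), U k with hT
  have hTm : ∀ n, MeasurableSet (T n) :=
    fun n => MeasurableSet.biUnion (Set.to_countable _) (fun k _ => hUm k)
  have hTanti : Antitone T := by
    intro n m' hnm x hx
    rw [hT, Set.mem_iUnion] at hx ⊢
    obtain ⟨k, hk⟩ := hx
    rw [Set.mem_iUnion] at hk
    obtain ⟨hk1, hk2⟩ := hk
    exact ⟨k, Set.mem_iUnion.2 ⟨le_trans hnm hk1, hk2⟩⟩
  have hTb : ∀ n, ENNReal.ofReal (L / (2 * C + c⁻¹)) ≤ μ (T n) := by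
    intro n
    refine le_trans (key (max n k₀) (le_max_right _ _)) (measure_mono ?_)
    intro x hx
    exact Set.mem_iUnion.2 ⟨max n k₀, Set.mem_iUnion.2 ⟨le_max_left _ _, hx⟩⟩
  have htend := tendsto_measure_iInter_atTop (μ := μ)
    (fun n => (hTm n).nullMeasurableSet) hTanti ⟨0, measure_ne_top μ _⟩
  have hInt : ENNReal.ofReal (L / (2 * C + c⁻¹)) ≤ μ (⋂ n, T n) :=
    ge_of_tendsto htend (Filter.Eventually.of_forall hTb)
  -- inclusion into the limsup set
  have hsub : (⋂ n, T n) ⊆ {x : ℝ | ∀ N : ℝ, ∃ Q ∈ QQ, N ≤ Q ∧ x ∈ S' Q} := by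
    intro x hx N
    have hxn := Set.mem_iInter.1 hx ⌈N⌉₊
    rw [hT, Set.mem_iUnion] at hxn
    obtain ⟨k, hk⟩ := hxn
    rw [Set.mem_iUnion] at hk
    obtain ⟨hk1, hk2⟩ := hk
    rw [hUdef, Set.mem_iUnion] at hk2
    obtain ⟨Q, hQ⟩ := hk2
    rw [Set.mem_iUnion] at hQ
    obtain ⟨hQF, hxQ⟩ := hQ
    have hQmem := hQk k hQF
    refine ⟨Q, hQmem.1, ?_, hxQ⟩
    calc N ≤ (⌈N⌉₊ : ℝ) := Nat.le_ceil N
      _ ≤ (k : ℝ) := by exact_mod_cast hk1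
      _ ≤ Q := hQmem.2
  -- finish
  have hfin : volume ({x : ℝ | ∀ N : ℝ, ∃ Q ∈ QQ, N ≤ Q ∧ x ∈ S' Q} ∩ Set.Icc a b) ≠ ∞ := by
    refine ne_top_of_le_ne_top ?_ (measure_mono Set.inter_subset_right)
    rw [Real.volume_Icc]
    exact ENNReal.ofReal_ne_top
  have hle : ENNReal.ofReal (L / (2 * C + c⁻¹)) ≤
      volume ({x : ℝ | ∀ N : ℝ, ∃ Q ∈ QQ, N ≤ Q ∧ x ∈ S' Q} ∩ Set.Icc a b) := by
    refine le_trans hInt ?_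
    rw [hμ, Measure.restrict_apply (MeasurableSet.iInter hTm)]
    exact measure_mono (Set.inter_subset_inter_left _ hsub)
  have hfinal := (ENNReal.ofReal_le_iff_le_toReal hfin).1 hle
  rw [le_div_iff₀ hL]
  calc 1 / (2 * C + c⁻¹) * L = L / (2 * C + c⁻¹) := by ring
    _ ≤ _ := hfinal
end
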